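/- arXiv:1610.04944 — 5 statements merged into one kernel-verified Lean document; each statement's English description precedes it below -/
import Mathlib

section
/- Let (W,S) be a Coxeter system with Bruhat order ≤. For any elements u, v ∈ W, the set {u'v : u' ≤ u} has a maximum element with respect to the Bruhat order. -/
open List

/-- The Bruhat order on a Coxeter group: `u ≤ v` iff some reduced word for `v`
contains a reduced word for `u` as a subword. -/
def bruhatLE {B W : Type*} [Group W] {M : CoxeterMatrix B} (cs : CoxeterSystem M W)
    (u v : W) : Prop :=
  ∃ ω : List B, cs.IsReduced ω ∧ cs.wordProd ω = v ∧
    ∃ ω' : List B, ω'.Sublist ω ∧ cs.IsReduced ω' ∧ cs.wordProd ω' = u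

namespace BruhatAux

variable {B W : Type*} [Group W] {M : CoxeterMatrix B} (cs : CoxeterSystem M W)

open CoxeterSystem

local prefix:100 "σ" => cs.simple
local prefix:100 "πw" => cs.wordProd
local prefix:100 "ℓ" => cs.length
local prefix:100 "ris" => cs.rightInvSeq
local prefix:100 "lis" => cs.leftInvSeq

noncomputable local instance : DecidableEq W := Classical.decEq W

theorem conj_eq_conj_iff (g a b : W) : g * a * g⁻¹ = g * b * g⁻¹ ↔ a = b := by
  constructor
  · intro h
    exact mul_left_cancel (mul_right_cancel h)
  · intro h; rw [h]

theorem simple_conj_simple (i : B) (t : W) : σ i * (σ i * t * σ i) * σ i = t := by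
  simp [mul_assoc, cs.simple_mul_simple_cancel_left, cs.simple_mul_simple_self]

theorem conj_simple_eq_simple_iff (i : B) (t : W) : σ i * t * σ i = σ i ↔ t = σ i := by
  constructor
  · intro h
    have h2 := congrArg (fun w => σ i * w * σ i) h
    simp only [simple_conj_simple] at h2
    rw [h2, cs.simple_mul_simple_self, one_mul]
  · intro h
    rw [h, cs.simple_mul_simple_self, one_mul]

/-- The sign/reflection permutation for a generator. -/
noncomputable def eta (i : B) : Equiv.Perm (W × ℤˣ) :=
  Function.Involutive.toPerm
    (fun p => (σ i * p.1 * σ i, if p.1 = σ i then -p.2 else p.2))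
    (by
      rintro ⟨t, e⟩
      by_cases h : t = σ i
      · simp only [h, if_pos rfl]
        rw [if_pos (((conj_simple_eq_simple_iff cs i _)).mpr rfl)]
        simp [simple_conj_simple]
      · simp only [if_neg h]
        rw [if_neg (fun hc => h ((conj_simple_eq_simple_iff cs i t).mp hc))]
        simp [simple_conj_simple])

theorem eta_apply (i : B) (t : W) (e : ℤˣ) :
    eta cs i (t, e) = (σ i * t * σ i, if t = σ i then -e else e) := rfl

theorem eta_prod_apply (ω : List B) (t : W) (e : ℤˣ) :
    ((ω.map (eta cs)).prod) (t, e) =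
      (πw ω * t * (πw ω)⁻¹, (-1 : ℤˣ) ^ (List.count t (ris ω)) * e) := by
  induction ω with
  | nil => simp
  | cons i ω ih =>
      rw [map_cons, prod_cons, Equiv.Perm.mul_apply, ih, eta_apply]
      have hris : ris (i :: ω) = ((πw ω)⁻¹ * σ i * πw ω) :: ris ω := rfl
      have hfst : σ i * (πw ω * t * (πw ω)⁻¹) * σ i
          = πw (i :: ω) * t * (πw (i :: ω))⁻¹ := by
        rw [cs.wordProd_cons]
        nth_rw 2 [← cs.inv_simple]
        group
      have hcond : (πw ω * t * (πw ω)⁻¹ = σ i) ↔ (t = (πw ω)⁻¹ * σ i * πw ω) := by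
        have h2 : (σ i : W) = πw ω * ((πw ω)⁻¹ * σ i * πw ω) * (πw ω)⁻¹ := by group
        constructor
        · intro h
          have := h.trans h2
          exact (conj_eq_conj_iff _ _ _).mp this
        · intro h
          rw [h, ← h2]
      rw [hris]
      by_cases h : t = (πw ω)⁻¹ * σ i * πw ω
      · rw [if_pos (hcond.mpr h), hfst]
        rw [h, List.count_cons_self, pow_succ]
        simp [mul_comm, mul_assoc]
      · rw [if_neg (fun hc => h (hcond.mp hc)), hfst,
          List.count_cons_of_ne (fun hc => h hc.symm)]


theorem alternatingWord_two_mul_succ (i i' : B) (m : ℕ) :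
    alternatingWord i i' (2 * (m + 1)) = i :: i' :: alternatingWord i i' (2 * m) := by
  have h1 : 2 * (m + 1) = (2 * m + 1) + 1 := by omega
  rw [h1, alternatingWord_succ' i i' (2 * m + 1), alternatingWord_succ' i i' (2 * m)]
  simp [Nat.even_add_one, parity_simps]

theorem prod_map_alternatingWord {G : Type*} [Monoid G] (f : B → G) (i i' : B) (m : ℕ) :
    ((alternatingWord i i' (2 * m)).map f).prod = (f i * f i') ^ m := by
  induction m with
  | zero => simp [alternatingWord]
  | succ m ih =>
      rw [alternatingWord_two_mul_succ, map_cons, map_cons, prod_cons, prod_cons, ih, pow_succ']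
      rw [mul_assoc]

theorem alternatingWord_one (i i' : B) : alternatingWord i i' 1 = [i'] := rfl

theorem prod_alt_odd (i i' : B) (r : ℕ) :
    πw (alternatingWord i i' (2 * r + 1)) = σ i' * (σ i * σ i') ^ r := by
  rw [cs.prod_alternatingWord_eq_mul_pow]
  have : ¬ Even (2 * r + 1) := by simp [parity_simps]
  rw [if_neg this, show (2 * r + 1) / 2 = r from by omega]

theorem getD_ris_alternatingWord (n : ℕ) :
    ∀ (i i' : B) (k : ℕ), k < n →
      (ris (alternatingWord i i' n)).getD k 1 = πw (alternatingWord i i' (2 * (n - k) - 1)) := by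
  induction n with
  | zero => intro i i' k hk; omega
  | succ n ih =>
      intro i i' k hk
      rw [alternatingWord_succ, rightInvSeq_concat]
      have hlen : (List.map (MulAut.conj (σ i')) (ris (alternatingWord i' i n))).length = n := by
        simp
      rcases Nat.lt_or_ge k n with hkn | hkn
      · rw [concat_eq_append, getD_append _ _ _ _ (by omega)]
        rw [getD_eq_getElem _ _ (by omega), getElem_map]
        rw [← getD_eq_getElem _ 1 (by simp; omega), ih i' i k hkn]
        have hr : n - k = (n - k - 1) + 1 := by omega
        set r : ℕ := n - k - 1 with hrdef
        have h1 : 2 * (n - k) - 1 = 2 * r + 1 := by omega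
        have h2 : 2 * (n + 1 - k) - 1 = 2 * (r + 1) + 1 := by omega
        rw [h1, h2, prod_alt_odd, prod_alt_odd]
        have sc : SemiconjBy (σ i) ((σ i' * σ i) ^ r) ((σ i * σ i') ^ r) :=
          (SemiconjBy.pow_right (by unfold SemiconjBy; group) r)
        show σ i' * (σ i * (σ i' * σ i) ^ r) * (σ i')⁻¹ = σ i' * (σ i * σ i') ^ (r + 1)
        rw [sc.eq, cs.inv_simple, pow_succ]
        group
      · have hk' : k = n := by omega
        rw [hk', concat_eq_append, getD_append_right _ _ _ _ (by omega)]
        simp only [hlen, Nat.sub_self]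
        have h2 : 2 * (n + 1 - n) - 1 = 1 := by omega
        rw [h2, alternatingWord_one]
        simp

theorem even_count_ris_alt (i i' : B) (m : ℕ) (hpow : (σ i * σ i') ^ m = 1) (t : W) :
    Even (List.count t (ris (alternatingWord i i' (2 * m)))) := by
  have hlen : (ris (alternatingWord i i' (2 * m))).length = 2 * m := by simp
  have htake : (ris (alternatingWord i i' (2 * m))).take m
      = (ris (alternatingWord i i' (2 * m))).drop m := by
    apply List.ext_getElem
    · simp only [List.length_take, List.length_drop, hlen]
      omega
    · intro k h1 h2
      have hk : k < m := by
        rw [List.length_take, hlen] at h1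
        omega
      rw [List.getElem_take, List.getElem_drop]
      rw [← getD_eq_getElem _ 1 (by omega), ← getD_eq_getElem _ 1 (by omega)]
      rw [getD_ris_alternatingWord cs (2 * m) i i' k (by omega),
        getD_ris_alternatingWord cs (2 * m) i i' (m + k) (by omega)]
      have e1 : 2 * (2 * m - k) - 1 = 2 * ((m - k - 1) + m) + 1 := by omega
      have e2 : 2 * (2 * m - (m + k)) - 1 = 2 * (m - k - 1) + 1 := by omega
      rw [e1, e2, prod_alt_odd, prod_alt_odd, pow_add, hpow, mul_one]
  have hsplit : ris (alternatingWord i i' (2 * m))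
      = (ris (alternatingWord i i' (2 * m))).take m
        ++ (ris (alternatingWord i i' (2 * m))).drop m :=
    (List.take_append_drop m _).symm
  rw [hsplit, List.count_append, htake]
  exact ⟨List.count t ((ris (alternatingWord i i' (2 * m))).drop m), by omega⟩

theorem even_count_ris_braid (i i' : B) (t : W) :
    Even (List.count t (ris (alternatingWord i i' (2 * M i i')))) :=
  even_count_ris_alt cs i i' (M i i') (cs.simple_mul_simple_pow i i') t

theorem isLiftable_eta : M.IsLiftable (fun i => eta cs i) := by
  intro i i'
  have h1 : ((eta cs i) * (eta cs i')) ^ (M i i')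
      = ((alternatingWord i i' (2 * M i i')).map (eta cs)).prod :=
    (prod_map_alternatingWord (fun j => eta cs j) i i' (M i i')).symm
  have hprod : πw (alternatingWord i i' (2 * M i i')) = 1 := by
    rw [cs.prod_alternatingWord_eq_mul_pow]
    rw [if_pos (by simp [parity_simps])]
    rw [one_mul, show 2 * M i i' / 2 = M i i' from by omega, cs.simple_mul_simple_pow]
  apply Equiv.ext
  rintro ⟨t, e⟩
  rw [h1, eta_prod_apply, hprod]
  have := even_count_ris_braid cs i i' t
  rw [Even.neg_one_pow this]
  simp

noncomputable def phi : W →* Equiv.Perm (W × ℤˣ) := cs.lift ⟨fun i => eta cs i, isLiftable_eta cs⟩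

theorem phi_wordProd (ω : List B) : phi cs (πw ω) = (ω.map (eta cs)).prod := by
  unfold CoxeterSystem.wordProd
  rw [MonoidHom.map_list_prod, List.map_map]
  congr 1
  apply List.map_congr_left
  intro j _
  exact cs.lift_apply_simple (isLiftable_eta cs) j

theorem count_ris_parity {ω ω' : List B} (h : πw ω = πw ω') (t : W) :
    Even (List.count t (ris ω)) ↔ Even (List.count t (ris ω')) := by
  have h1 : ((ω.map (eta cs)).prod) (t, 1) = ((ω'.map (eta cs)).prod) (t, 1) := by
    rw [← phi_wordProd, ← phi_wordProd, h]
  rw [eta_prod_apply, eta_prod_apply] at h1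
  have h2 : (-1 : ℤˣ) ^ (List.count t (ris ω)) = (-1 : ℤˣ) ^ (List.count t (ris ω')) := by
    have := congrArg Prod.snd h1
    simpa using this
  have hne : (-1 : ℤˣ) ≠ 1 := by
    intro hc
    have := congrArg Units.val hc
    simp at this
  constructor
  · intro he
    rw [Even.neg_one_pow he] at h2
    exact (neg_one_pow_eq_one_iff_even hne).mp h2.symm
  · intro he
    rw [Even.neg_one_pow he] at h2
    exact (neg_one_pow_eq_one_iff_even hne).mp h2

theorem ris_append (ω₁ ω₂ : List B) :
    ris (ω₁ ++ ω₂) = (ris ω₁).map (fun t => (πw ω₂)⁻¹ * t * πw ω₂) ++ ris ω₂ := by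
  induction ω₁ with
  | nil => simp
  | cons j ω₁ ih =>
      show ((πw (ω₁ ++ ω₂))⁻¹ * σ j * πw (ω₁ ++ ω₂)) :: ris (ω₁ ++ ω₂) = _
      rw [ih]
      show _ = ((πw ω₂)⁻¹ * ((πw ω₁)⁻¹ * σ j * πw ω₁) * πw ω₂) :: _ ++ _
      rw [cs.wordProd_append]
      congr 1
      group

theorem count_eq_of_pointwise {α : Type*} [DecidableEq α] :
    ∀ (l₁ l₂ : List α) (a b d : α), l₁.length = l₂.length →
      (∀ k, k < l₁.length → (l₁.getD k d = a ↔ l₂.getD k d = b)) →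
      List.count a l₁ = List.count b l₂ := by
  intro l₁
  induction l₁ with
  | nil =>
      intro l₂ a b d hlen _
      rw [List.length_nil] at hlen
      rw [(List.length_eq_zero_iff.mp hlen.symm)]
      simp
  | cons x l₁ ih =>
      intro l₂ a b d hlen hpt
      match l₂ with
      | [] => simp at hlen
      | y :: l₂ =>
          have h0 := hpt 0 (by simp)
          simp only [List.getD_cons_zero] at h0
          have hrest : List.count a l₁ = List.count b l₂ := by
            apply ih l₂ a b d (by simpa using hlen)
            intro k hk
            have := hpt (k + 1) (by simpa using Nat.succ_lt_succ hk)
            simpa using this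
          by_cases hx : x = a
          · rw [hx, List.count_cons_self, h0.mp hx, List.count_cons_self, hrest]
          · rw [List.count_cons_of_ne (fun hc => hx hc),
              List.count_cons_of_ne (fun hc => hx (h0.mpr hc)), hrest]

theorem lis_ris_cond (χ : List B) (i : B) (k : ℕ) (hk : k < χ.length) :
    (lis χ).getD k 1 = πw χ * σ i * (πw χ)⁻¹ ↔ (ris χ).getD k 1 = σ i := by
  rw [cs.getD_leftInvSeq, cs.getD_rightInvSeq]
  rw [List.getElem?_eq_getElem hk]
  simp only [Option.map_some, Option.getD_some]
  set y := πw (χ.take k) with hy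
  set z := πw (χ.drop (k + 1)) with hz
  set c := σ (χ[k]) with hc
  have hx : πw χ = y * (c * z) := by
    rw [hy, hz, hc]
    nth_rw 1 [← List.take_append_drop k χ]
    rw [cs.wordProd_append, List.drop_eq_getElem_cons hk, cs.wordProd_cons]
  have key : ∀ g a b : W, g * a * g⁻¹ = g * b * g⁻¹ ↔ a = b := fun g a b =>
    ⟨fun h => mul_left_cancel (mul_right_cancel h), fun h => by rw [h]⟩
  constructor
  · intro h
    rw [hx] at h
    calc z⁻¹ * c * z
        = (y * (c * z))⁻¹ * (y * c * y⁻¹) * (y * (c * z)) := by group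
      _ = (y * (c * z))⁻¹ * (y * (c * z) * σ i * (y * (c * z))⁻¹) * (y * (c * z)) := by
          rw [h]
      _ = σ i := by group
  · intro h
    rw [hx]
    calc y * c * y⁻¹
        = (y * (c * z)) * (z⁻¹ * c * z) * (y * (c * z))⁻¹ := by group
      _ = y * (c * z) * σ i * (y * (c * z))⁻¹ := by rw [h]

theorem odd_count_palindrome (χ : List B) (i : B) :
    ¬ Even (List.count (πw χ * σ i * (πw χ)⁻¹) (ris (χ ++ i :: χ.reverse))) := by
  rw [ris_append]
  have hπ2 : πw (i :: χ.reverse) = σ i * (πw χ)⁻¹ := by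
    rw [cs.wordProd_cons, cs.wordProd_reverse]
  have hinj : Function.Injective
      (fun w : W => (πw (i :: χ.reverse))⁻¹ * w * πw (i :: χ.reverse)) := by
    intro a b hab
    simp only at hab
    exact mul_left_cancel (mul_right_cancel hab)
  have hval : (fun w : W => (πw (i :: χ.reverse))⁻¹ * w * πw (i :: χ.reverse)) (σ i)
      = πw χ * σ i * (πw χ)⁻¹ := by
    simp only [hπ2, mul_inv_rev, inv_inv, cs.inv_simple]
    simp [mul_assoc, cs.simple_mul_simple_cancel_left]
  have hmap : List.count (πw χ * σ i * (πw χ)⁻¹)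
      ((ris χ).map (fun w : W => (πw (i :: χ.reverse))⁻¹ * w * πw (i :: χ.reverse)))
      = List.count (σ i) (ris χ) := by
    rw [← hval]
    exact List.count_map_of_injective _ _ hinj _
  have hhead : ris (i :: χ.reverse) = (πw χ * σ i * (πw χ)⁻¹) :: ris χ.reverse := by
    show ((πw χ.reverse)⁻¹ * σ i * πw χ.reverse) :: ris χ.reverse = _
    rw [cs.wordProd_reverse, inv_inv]
  have hrev : List.count (πw χ * σ i * (πw χ)⁻¹) (ris χ.reverse)
      = List.count (σ i) (ris χ) := by
    rw [cs.rightInvSeq_reverse, List.count_reverse]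
    apply count_eq_of_pointwise (d := 1)
    · rw [cs.length_leftInvSeq, cs.length_rightInvSeq]
    · intro k hk
      rw [cs.length_leftInvSeq] at hk
      exact lis_ris_cond cs χ i k hk
  rw [List.count_append, hmap, hhead, List.count_cons_self, hrev]
  intro hc
  rw [Nat.even_iff] at hc
  omega

theorem mem_ris_of_right_inversion {t w : W} (ht : cs.IsReflection t)
    (hlt : ℓ (w * t) < ℓ w) {ω : List B} (hω : πw ω = w) : t ∈ ris ω := by
  obtain ⟨x, i, hteq⟩ := ht
  obtain ⟨χ, hχred, hχ⟩ := cs.exists_reduced_word' x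
  have hχt : πw (χ ++ i :: χ.reverse) = t := by
    rw [cs.wordProd_append, cs.wordProd_cons, cs.wordProd_reverse, hteq, hχ]
    rw [mul_assoc]
  obtain ⟨ρ, hρred, hρ⟩ := cs.exists_reduced_word' (w * t)
  have htt : t * t = 1 := (CoxeterSystem.IsReflection.mul_self ⟨x, i, hteq⟩)
  have hprod : πw (ρ ++ (χ ++ i :: χ.reverse)) = w := by
    rw [cs.wordProd_append, hχt, ← hρ, mul_assoc, htt, mul_one]
  have hparity := count_ris_parity cs (hω.trans hprod.symm) t
  have hoddpal : ¬ Even (List.count t (ris (χ ++ i :: χ.reverse))) := by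
    have := odd_count_palindrome cs χ i
    rw [hχ] at hteq
    rwa [← hteq] at this
  have hmapcount : List.count t
      ((ris ρ).map (fun v : W => (πw (χ ++ i :: χ.reverse))⁻¹ * v * πw (χ ++ i :: χ.reverse)))
      = List.count t (ris ρ) := by
    have hval : (fun v : W => (πw (χ ++ i :: χ.reverse))⁻¹ * v * πw (χ ++ i :: χ.reverse)) t
        = t := by
      simp only [hχt]
      rw [CoxeterSystem.IsReflection.inv ⟨x, i, hteq⟩, htt, one_mul]
    have := List.count_map_of_injective (ris ρ)
      (fun v : W => (πw (χ ++ i :: χ.reverse))⁻¹ * v * πw (χ ++ i :: χ.reverse))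
      (fun a b hab => mul_left_cancel (mul_right_cancel hab)) t
    have hval2 : (πw (χ ++ i :: χ.reverse))⁻¹ * t * πw (χ ++ i :: χ.reverse) = t := hval
    rwa [hval2] at this
  by_cases hev : Even (List.count t (ris ω))
  · exfalso
    rw [hparity, ris_append, List.count_append, hmapcount] at hev
    rw [Nat.even_add] at hev
    have hρodd : ¬ Even (List.count t (ris ρ)) := fun hc => hoddpal (hev.mp hc)
    have hρmem : t ∈ ris ρ := by
      by_contra hc
      have h0 := List.count_eq_zero_of_not_mem hc
      exact hρodd (by simp [h0])
    obtain ⟨j, hj, hjt⟩ := List.mem_iff_getElem.mp hρmem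
    have hjlen : j < ρ.length := by
      rwa [cs.length_rightInvSeq] at hj
    have := cs.wordProd_mul_getD_rightInvSeq ρ j
    rw [List.getD_eq_getElem _ 1 hj, hjt, ← hρ, mul_assoc, htt, mul_one] at this
    have hlen1 : ℓ w ≤ (ρ.eraseIdx j).length := this ▸ cs.length_wordProd_le (ρ.eraseIdx j)
    have hlen2 : (ρ.eraseIdx j).length = ρ.length - 1 := by
      rw [List.length_eraseIdx]
      simp [hjlen]
    have hlen3 : ρ.length = ℓ (w * t) := by
      rw [hρ]
      exact hρred.symm
    omega
  · by_contra hc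
    have h0 := List.count_eq_zero_of_not_mem hc
    exact hev (by simp [h0])

theorem strong_exchange_right {t w : W} (ht : cs.IsReflection t)
    (hlt : ℓ (w * t) < ℓ w) {ω : List B} (hω : πw ω = w) :
    ∃ j, j < ω.length ∧ w * t = πw (ω.eraseIdx j) := by
  have hmem := mem_ris_of_right_inversion cs ht hlt hω
  obtain ⟨j, hj, hjt⟩ := List.mem_iff_getElem.mp hmem
  have hjlen : j < ω.length := by rwa [cs.length_rightInvSeq] at hj
  refine ⟨j, hjlen, ?_⟩
  have := cs.wordProd_mul_getD_rightInvSeq ω j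
  rw [List.getD_eq_getElem _ 1 hj, hjt, hω] at this
  exact this

theorem strong_exchange_left {t w : W} (ht : cs.IsReflection t)
    (hlt : ℓ (t * w) < ℓ w) {ω : List B} (hω : πw ω = w) :
    ∃ j, j < ω.length ∧ t * w = πw (ω.eraseIdx j) := by
  have h1 : πw ω.reverse = w⁻¹ := by rw [cs.wordProd_reverse, hω]
  have h2 : ℓ (w⁻¹ * t) < ℓ (w⁻¹) := by
    have e : (w⁻¹ * t)⁻¹ = t * w := by rw [mul_inv_rev, inv_inv, ht.inv]
    rw [← cs.length_inv (w⁻¹ * t), e, cs.length_inv]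
    exact hlt
  have hmem := mem_ris_of_right_inversion cs ht h2 h1
  rw [cs.rightInvSeq_reverse, List.mem_reverse] at hmem
  obtain ⟨j, hj, hjt⟩ := List.mem_iff_getElem.mp hmem
  have hjlen : j < ω.length := by rwa [cs.length_leftInvSeq] at hj
  refine ⟨j, hjlen, ?_⟩
  have := cs.getD_leftInvSeq_mul_wordProd ω j
  rw [List.getD_eq_getElem _ 1 hj, hjt, hω] at this
  exact this

/-- Any word has a reduced sublist with the same product. -/
theorem exists_reduced_sublist (ω : List B) :
    ∃ ω', ω' <+ ω ∧ cs.IsReduced ω' ∧ πw ω' = πw ω := by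
  induction ω with
  | nil => exact ⟨[], List.Sublist.refl _, by simp [CoxeterSystem.IsReduced], rfl⟩
  | cons i ω ih =>
      obtain ⟨ω₁, hsub, hred, hprod⟩ := ih
      by_cases h : cs.IsReduced (i :: ω₁)
      · refine ⟨i :: ω₁, List.Sublist.cons₂ i hsub, h, ?_⟩
        rw [cs.wordProd_cons, cs.wordProd_cons, hprod]
      · have hlen : ℓ (σ i * πw ω₁) ≤ ω₁.length := by
          have h1 := cs.length_wordProd_le (i :: ω₁)
          rw [cs.wordProd_cons] at h1
          rw [List.length_cons] at h1
          have h2 : ℓ (σ i * πw ω₁) ≠ ω₁.length + 1 := by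
            intro hc
            apply h
            unfold CoxeterSystem.IsReduced
            rw [cs.wordProd_cons, List.length_cons, hc]
          omega
        have hlt : ℓ (σ i * πw ω₁) < ℓ (πw ω₁) := by
          have h3 := cs.length_simple_mul (πw ω₁) i
          rw [hred] at h3 ⊢
          rcases h3 with h3 | h3 <;> omega
        obtain ⟨j, hj, hjeq⟩ := strong_exchange_left cs (cs.isReflection_simple i) hlt rfl
        refine ⟨ω₁.eraseIdx j, ?_, ?_, ?_⟩
        · exact List.Sublist.trans (List.eraseIdx_sublist ω₁ j) (List.sublist_cons_of_sublist i hsub)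
        · unfold CoxeterSystem.IsReduced
          rw [← hjeq]
          have h5 : ℓ (σ i * πw ω₁) = ℓ (πw ω₁) - 1 := by
            have h3 := cs.length_simple_mul (πw ω₁) i
            rcases h3 with h3 | h3 <;> omega
          rw [h5, hred, List.length_eraseIdx]
          simp [hj]
        · rw [← hjeq, cs.wordProd_cons, hprod]

/-- One step in a Bruhat chain: multiply by a reflection, increasing length. -/
def chainStep (x y : W) : Prop := ∃ t, cs.IsReflection t ∧ y = x * t ∧ ℓ x < ℓ y

/-- Bruhat order via chains of reflections. -/
def cLE (x y : W) : Prop := Relation.ReflTransGen (chainStep cs) x y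

theorem cLE_refl (x : W) : cLE cs x x := Relation.ReflTransGen.refl

theorem cLE_trans {x y z : W} (h1 : cLE cs x y) (h2 : cLE cs y z) : cLE cs x z :=
  Relation.ReflTransGen.trans h1 h2

theorem chainStep_left {x : W} (t : W) (ht : cs.IsReflection t) (h : ℓ x < ℓ (t * x)) :
    chainStep cs x (t * x) := by
  refine ⟨x⁻¹ * t * x, ?_, by group, ?_⟩
  · have := ht.conj x⁻¹
    rwa [inv_inv] at this
  · exact h

theorem cLE_up {x : W} (i : B) (h : ℓ x < ℓ (σ i * x)) : cLE cs x (σ i * x) :=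
  Relation.ReflTransGen.single (chainStep_left cs (σ i) (cs.isReflection_simple i) h)

theorem cLE_down {x : W} (i : B) (h : ℓ (σ i * x) < ℓ x) : cLE cs (σ i * x) x := by
  have h2 : ℓ (σ i * x) < ℓ (σ i * (σ i * x)) := by
    rwa [cs.simple_mul_simple_cancel_left]
  have := cLE_up cs i h2
  rwa [cs.simple_mul_simple_cancel_left] at this

theorem cLE_subword {x y : W} (h : cLE cs x y) :
    ∀ ω : List B, cs.IsReduced ω → πw ω = y →
      ∃ ω', ω' <+ ω ∧ cs.IsReduced ω' ∧ πw ω' = x := by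
  induction h using Relation.ReflTransGen.head_induction_on with
  | refl =>
      intro ω hred hω
      exact ⟨ω, List.Sublist.refl _, hred, hω⟩
  | @head a c hstep hchain ih =>
      intro ω hred hω
      obtain ⟨ω₁, hsub₁, hred₁, hprod₁⟩ := ih ω hred hω
      obtain ⟨t, ht, hc, hlen⟩ := hstep
      have ha : c * t = a := by rw [hc, mul_assoc, ht.mul_self, mul_one]
      have hlt : ℓ (c * t) < ℓ c := by rw [ha]; exact hlen
      obtain ⟨j, hj, hjeq⟩ := strong_exchange_right cs ht hlt hprod₁
      obtain ⟨ω₂, hsub₂, hred₂, hprod₂⟩ := exists_reduced_sublist cs (ω₁.eraseIdx j)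
      refine ⟨ω₂, ?_, hred₂, ?_⟩
      · exact hsub₂.trans ((List.eraseIdx_sublist ω₁ j).trans hsub₁)
      · rw [hprod₂, ← hjeq, ha]

theorem main_induction (n : ℕ) :
    (∀ ω : List B, ω.length = n → cs.IsReduced ω →
      ∀ ω', ω' <+ ω → cLE cs (πw ω') (πw ω)) ∧
    (∀ y : W, ℓ y = n → ∀ (i : B) (x : W), cLE cs x y → ℓ (σ i * y) < ℓ y →
      cLE cs (σ i * x) y) ∧
    (∀ w : W, ℓ w = n → ∀ (i : B) (x : W), cLE cs x w → ℓ w < ℓ (σ i * w) →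
      ℓ x < ℓ (σ i * x) → cLE cs (σ i * x) (σ i * w)) := by
  induction n using Nat.strong_induction_on with
  | _ n IH =>
  refine ⟨?_, ?_, ?_⟩
  -- Part (i'): subword implies chain
  · intro ω hlen hred ω'₀ hsub₀
    obtain ⟨ω', hsub', hred', hprod'⟩ := exists_reduced_sublist cs ω'₀
    rw [← hprod']
    have hsub : ω' <+ ω := hsub'.trans hsub₀
    clear hsub' hprod' hsub₀
    cases ω with
    | nil =>
        rw [List.sublist_nil.mp hsub]
        exact cLE_refl cs _
    | cons k T =>
        have hTred : cs.IsReduced T := by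
          have := hred.drop 1
          simpa using this
        have hn : n = T.length + 1 := by
          rw [List.length_cons] at hlen
          omega
        have hup : ℓ (πw T) < ℓ (σ k * πw T) := by
          rw [← cs.wordProd_cons, hred, hTred, List.length_cons]
          omega
        have hstepT : cLE cs (πw T) (πw (k :: T)) := by
          rw [cs.wordProd_cons]
          exact cLE_up cs k hup
        rcases List.sublist_cons_iff.mp hsub with h1 | ⟨r, hreq, hrsub⟩
        · have := (IH T.length (by omega)).1 T rfl hTred ω' h1
          exact cLE_trans cs this hstepT
        · subst hreq
          have hx := (IH T.length (by omega)).1 T rfl hTred r hrsub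
          have hxup : ℓ (πw r) < ℓ (σ k * πw r) := by
            have h2 := cs.length_wordProd_le r
            rw [← cs.wordProd_cons, hred', List.length_cons]
            omega
          have hC := (IH T.length (by omega)).2.2 (πw T) hTred k (πw r) hx hup hxup
          rw [cs.wordProd_cons, cs.wordProd_cons]
          exact hC
  -- Part (A): lifting down
  · intro y hy i x hxy hdesc
    rcases Relation.ReflTransGen.cases_tail hxy with heq | ⟨z, hxz, hstep⟩
    · rw [heq] at hdesc ⊢
      exact cLE_down cs i hdesc
    · obtain ⟨t, ht, hyz, hlenz⟩ := hstep
      have hzy : cLE cs z y := Relation.ReflTransGen.single ⟨t, ht, hyz, hlenz⟩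
      rcases Nat.lt_or_ge (ℓ (σ i * z)) (ℓ z) with hsz | hsz
      · have := (IH (ℓ z) (by omega)).2.1 z rfl i x hxz hsz
        exact cLE_trans cs this hzy
      · have hsz' : ℓ z < ℓ (σ i * z) :=
          lt_of_le_of_ne hsz (fun hc => cs.length_simple_mul_ne z i hc.symm)
        rcases Nat.lt_or_ge (ℓ (σ i * x)) (ℓ x) with hsx | hsx
        · exact cLE_trans cs (cLE_down cs i hsx) (cLE_trans cs hxz hzy)
        · have hsx' : ℓ x < ℓ (σ i * x) :=
            lt_of_le_of_ne hsx (fun hc => cs.length_simple_mul_ne x i hc.symm)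
          -- strong exchange with a reduced word for y starting with i
          obtain ⟨Ω, hΩred, hΩ⟩ := cs.exists_reduced_word' (σ i * y)
          have hΩlen : Ω.length = n - 1 := by
            have h3 := cs.length_simple_mul y i
            rw [← hΩred, ← hΩ]
            rcases h3 with h3 | h3 <;> omega
          have hiΩ : πw (i :: Ω) = y := by
            rw [cs.wordProd_cons, ← hΩ, cs.simple_mul_simple_cancel_left]
          have hiΩred : cs.IsReduced (i :: Ω) := by
            unfold CoxeterSystem.IsReduced
            rw [hiΩ, List.length_cons, hΩlen, hy]
            omega
          have hzt : ℓ (y * t) < ℓ y := by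
            rw [show y * t = z from by rw [hyz, mul_assoc, ht.mul_self, mul_one]]
            exact hlenz
          obtain ⟨j, hj, hjeq⟩ := strong_exchange_right cs ht hzt hiΩ
          have hzeq : z = πw ((i :: Ω).eraseIdx j) := by
            rw [← hjeq, hyz, mul_assoc, ht.mul_self, mul_one]
          match j, hj with
          | 0, hj =>
              rw [List.eraseIdx_cons_zero] at hzeq
              -- z = σ i * y, so σ i * z = y
              have hz2 : σ i * z = y := by
                rw [hzeq, ← hΩ, cs.simple_mul_simple_cancel_left]
              have := (IH (ℓ z) (by omega)).2.2 z rfl i x hxz (by rw [hz2]; omega) hsx'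
              rwa [hz2] at this
          | (j' + 1), hj =>
              rw [List.eraseIdx_cons_succ] at hzeq
              have hsiz : σ i * z = πw (Ω.eraseIdx j') := by
                rw [hzeq, cs.wordProd_cons, cs.simple_mul_simple_cancel_left]
              have h4 := (IH Ω.length (by omega)).1 Ω rfl hΩred (Ω.eraseIdx j')
                (List.eraseIdx_sublist Ω j')
              rw [← hsiz, ← hΩ] at h4
              -- h4 : cLE (σ i * z) (σ i * y)
              have h5 := (IH (ℓ z) (by omega)).2.2 z rfl i x hxz hsz' hsx'
              have h6 : cLE cs (σ i * y) y := cLE_down cs i hdesc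
              exact cLE_trans cs h5 (cLE_trans cs h4 h6)
  -- Part (C): lifting up
  · intro w hw i x hxw hup hxup
    rcases Relation.ReflTransGen.cases_tail hxw with heq | ⟨z, hxz, hstep⟩
    · rw [heq]
      exact cLE_refl cs _
    · obtain ⟨t, ht, hwz, hlenz⟩ := hstep
      rcases Nat.lt_or_ge (ℓ (σ i * z)) (ℓ z) with hsz | hsz
      · have h1 := (IH (ℓ z) (by omega)).2.1 z rfl i x hxz hsz
        have h2 : cLE cs z w := Relation.ReflTransGen.single ⟨t, ht, hwz, hlenz⟩
        have h3 : cLE cs w (σ i * w) := cLE_up cs i hup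
        exact cLE_trans cs h1 (cLE_trans cs h2 h3)
      · have hsz' : ℓ z < ℓ (σ i * z) :=
          lt_of_le_of_ne hsz (fun hc => cs.length_simple_mul_ne z i hc.symm)
        have h1 := (IH (ℓ z) (by omega)).2.2 z rfl i x hxz hsz' hxup
        have hstep2 : chainStep cs (σ i * z) (σ i * w) := by
          refine ⟨t, ht, by rw [hwz, mul_assoc], ?_⟩
          have e1 := cs.length_simple_mul z i
          have e2 := cs.length_simple_mul w i
          omega
        exact cLE_trans cs h1 (Relation.ReflTransGen.single hstep2)

theorem subword_cLE {ω ω' : List B} (hred : cs.IsReduced ω) (hsub : ω' <+ ω) :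
    cLE cs (πw ω') (πw ω) := (main_induction cs ω.length).1 ω rfl hred ω' hsub

theorem liftA {x y : W} (i : B) (h : cLE cs x y) (hdesc : ℓ (σ i * y) < ℓ y) :
    cLE cs (σ i * x) y := (main_induction cs (ℓ y)).2.1 y rfl i x h hdesc

theorem liftC {x w : W} (i : B) (h : cLE cs x w) (hup : ℓ w < ℓ (σ i * w))
    (hxup : ℓ x < ℓ (σ i * x)) : cLE cs (σ i * x) (σ i * w) :=
  (main_induction cs (ℓ w)).2.2 w rfl i x h hup hxup

theorem cLE_of_le_one {x : W} (h : cLE cs x 1) : x = 1 := by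
  rcases Relation.ReflTransGen.cases_tail h with heq | ⟨z, hxz, hstep⟩
  · exact heq.symm
  · obtain ⟨t, ht, h1, hlen⟩ := hstep
    rw [cs.length_one] at hlen
    omega

theorem chain_descent {u' u : W} (i : B) (h : cLE cs u' u) (hdesc : ℓ (σ i * u) < ℓ u) :
    cLE cs u' (σ i * u) ∨ (ℓ (σ i * u') < ℓ u' ∧ cLE cs (σ i * u') (σ i * u)) := by
  obtain ⟨Ω, hΩred, hΩ⟩ := cs.exists_reduced_word' (σ i * u)
  have hΩlen : Ω.length = ℓ (σ i * u) := by rw [← hΩred, ← hΩ]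
  have hiΩ : πw (i :: Ω) = u := by
    rw [cs.wordProd_cons, ← hΩ, cs.simple_mul_simple_cancel_left]
  have hiΩred : cs.IsReduced (i :: Ω) := by
    unfold CoxeterSystem.IsReduced
    rw [hiΩ, List.length_cons, hΩlen]
    have := cs.length_simple_mul u i
    rcases this with h1 | h1 <;> omega
  obtain ⟨ω', hsub, hred', hprod'⟩ := cLE_subword cs h (i :: Ω) hiΩred hiΩ
  rcases List.sublist_cons_iff.mp hsub with h1 | ⟨r, hreq, hrsub⟩
  · left
    have h2 := subword_cLE cs hΩred h1
    rw [hprod'] at h2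
    rw [hΩ]
    exact h2
  · right
    subst hreq
    have hsi : σ i * u' = πw r := by
      rw [← hprod', cs.wordProd_cons, cs.simple_mul_simple_cancel_left]
    constructor
    · rw [hsi]
      have h2 := cs.length_wordProd_le r
      have h3 : ℓ u' = r.length + 1 := by
        rw [← hprod', hred', List.length_cons]
      omega
    · rw [hsi, hΩ]
      exact subword_cLE cs hΩred hrsub

theorem demazure_max_aux : ∀ (n : ℕ) (u v : W), ℓ u = n →
    ∃ u₀, cLE cs u₀ u ∧ ∀ u', cLE cs u' u → cLE cs (u' * v) (u₀ * v) := by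
  intro n
  induction n using Nat.strong_induction_on with
  | _ n IH =>
  intro u v hn
  by_cases hu : u = 1
  · subst hu
    refine ⟨1, cLE_refl cs 1, fun u' h => ?_⟩
    rw [cLE_of_le_one cs h]
    exact cLE_refl cs _
  · obtain ⟨i, hi0⟩ := cs.exists_leftDescent_of_ne_one hu
    have hi : ℓ (σ i * u) < ℓ u := hi0
    obtain ⟨u₀', hle', hmax'⟩ := IH (ℓ (σ i * u)) (by omega) (σ i * u) v rfl
    have hu1u : cLE cs (σ i * u) u := cLE_down cs i hi
    rcases Nat.lt_or_ge (ℓ (u₀' * v)) (ℓ (σ i * (u₀' * v))) with hMup | hMdown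
    · refine ⟨σ i * u₀', ?_, ?_⟩
      · rcases Nat.lt_or_ge (ℓ (σ i * u₀')) (ℓ u₀') with hd | hd
        · exact cLE_trans cs (cLE_down cs i hd) (cLE_trans cs hle' hu1u)
        · have hd' : ℓ u₀' < ℓ (σ i * u₀') :=
            lt_of_le_of_ne hd (fun hc => cs.length_simple_mul_ne u₀' i hc.symm)
          have h2 : ℓ (σ i * u) < ℓ (σ i * (σ i * u)) := by
            rwa [cs.simple_mul_simple_cancel_left]
          have h3 := liftC cs i hle' h2 hd'
          rwa [cs.simple_mul_simple_cancel_left] at h3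
      · intro u' hu'
        have hgoalr : (σ i * u₀') * v = σ i * (u₀' * v) := by rw [mul_assoc]
        rcases chain_descent cs i hu' hi with hcase | ⟨hdu', hcase⟩
        · have h1 := hmax' u' hcase
          have h2 : cLE cs (u₀' * v) (σ i * (u₀' * v)) := cLE_up cs i hMup
          rw [hgoalr]
          exact cLE_trans cs h1 h2
        · have h1 := hmax' (σ i * u') hcase
          have he : u' * v = σ i * ((σ i * u') * v) := by
            rw [← mul_assoc, cs.simple_mul_simple_cancel_left]
          rw [hgoalr, he]
          rcases Nat.lt_or_ge (ℓ ((σ i * u') * v)) (ℓ (σ i * ((σ i * u') * v))) with hX | hX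
          · exact liftC cs i h1 hMup hX
          · have hX' : ℓ (σ i * ((σ i * u') * v)) < ℓ ((σ i * u') * v) :=
              lt_of_le_of_ne hX (fun hc => cs.length_simple_mul_ne ((σ i * u') * v) i hc)
            exact cLE_trans cs (cLE_down cs i hX')
              (cLE_trans cs h1 (cLE_up cs i hMup))
    · have hMdown' : ℓ (σ i * (u₀' * v)) < ℓ (u₀' * v) :=
        lt_of_le_of_ne hMdown (fun hc => cs.length_simple_mul_ne (u₀' * v) i hc)
      refine ⟨u₀', cLE_trans cs hle' hu1u, ?_⟩
      intro u' hu'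
      rcases chain_descent cs i hu' hi with hcase | ⟨hdu', hcase⟩
      · exact hmax' u' hcase
      · have h1 := hmax' (σ i * u') hcase
        have he : u' * v = σ i * ((σ i * u') * v) := by
          rw [← mul_assoc, cs.simple_mul_simple_cancel_left]
        rw [he]
        exact liftA cs i h1 hMdown'

theorem cLE_of_bruhatLE {u' u : W} (h : bruhatLE cs u' u) : cLE cs u' u := by
  obtain ⟨ω, hred, hprod, ω', hsub, hred', hprod'⟩ := h
  have := subword_cLE cs hred hsub
  rwa [hprod, hprod'] at this

theorem bruhatLE_of_cLE {x m : W} (h : cLE cs x m) : bruhatLE cs x m := by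
  obtain ⟨ρ, hρred, hρ⟩ := cs.exists_reduced_word' m
  obtain ⟨ω', hsub, hred', hprod'⟩ := cLE_subword cs h ρ hρred hρ.symm
  exact ⟨ρ, hρred, hρ.symm, ω', hsub, hred', hprod'⟩

end BruhatAux

/-- For any `u, v` in a Coxeter group, the set `{u' * v : u' ≤ u}` has a
Bruhat-maximum element. -/
theorem stmt0 {B W : Type*} [Group W] {M : CoxeterMatrix B} (cs : CoxeterSystem M W)
    (u v : W) :
    ∃ m ∈ {x : W | ∃ u' : W, bruhatLE cs u' u ∧ x = u' * v},
      ∀ x ∈ {x : W | ∃ u' : W, bruhatLE cs u' u ∧ x = u' * v}, bruhatLE cs x m := by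
  obtain ⟨u₀, hle, hmax⟩ := BruhatAux.demazure_max_aux cs (cs.length u) u v rfl
  refine ⟨u₀ * v, ⟨u₀, BruhatAux.bruhatLE_of_cLE cs hle, rfl⟩, ?_⟩
  rintro x ⟨u', hu', rfl⟩
  exact BruhatAux.bruhatLE_of_cLE cs (hmax u' (BruhatAux.cLE_of_bruhatLE cs hu'))
end

section
/- Let (W,S) be a Coxeter system with length function ℓ and u, v ∈ W. Then uv equals the maximum u ∘ v of {u'v' : u' ≤ u, v' ≤ v} in Bruhat order if and only if ℓ(uv) = ℓ(u) + ℓ(v). -/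
open List

namespace StmtAux

open CoxeterSystem

variable {B W : Type*} [Group W] {M : CoxeterMatrix B} (cs : CoxeterSystem M W)

local prefix:100 "σ" => cs.simple
local prefix:100 "πw" => cs.wordProd
local prefix:100 "ℓ" => cs.length

/-! ### Parity counting function -/

open Classical in
/-- The number of occurrences of `t` in `l`, modulo 2. -/
noncomputable def chi (t : W) (l : List W) : ZMod 2 :=
  (l.map (fun r => if t = r then (1 : ZMod 2) else 0)).sum

@[simp] lemma chi_nil (t : W) : chi t ([] : List W) = 0 := rfl

open Classical in
lemma chi_cons (t x : W) (l : List W) :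
    chi t (x :: l) = (if t = x then (1:ZMod 2) else 0) + chi t l := by
  simp [chi]

lemma chi_append (t : W) (l₁ l₂ : List W) :
    chi t (l₁ ++ l₂) = chi t l₁ + chi t l₂ := by
  simp [chi]

lemma chi_reverse (t : W) (l : List W) : chi t l.reverse = chi t l := by
  simp [chi, List.sum_reverse]

open Classical in
lemma chi_congr_mem {t t' : W} {l l' : List W}
    (hlen : l.length = l'.length)
    (h : ∀ k, (hk : k < l.length) → (l[k] = t ↔ l'[k]'(hlen ▸ hk) = t')) :
    chi t l = chi t' l' := by
  induction l generalizing l' with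
  | nil => cases l' with
    | nil => rfl
    | cons a l' => simp at hlen
  | cons a l ih =>
    cases l' with
    | nil => simp at hlen
    | cons a' l' =>
      rw [chi_cons, chi_cons]
      have h0 := h 0 (by simp)
      simp only [getElem_cons_zero] at h0
      have : (if t = a then (1:ZMod 2) else 0) = (if t' = a' then (1:ZMod 2) else 0) := by
        by_cases hta : t = a
        · rw [if_pos hta, if_pos ((h0.mp hta.symm).symm)]
        · rw [if_neg hta, if_neg (fun hta' => hta ((h0.mpr hta'.symm).symm))]
      rw [this, ih (by simpa using hlen)]
      intro k hk
      have := h (k+1) (by simpa using Nat.succ_lt_succ hk)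
      simpa using this

lemma chi_map_conj1 (t y : W) (l : List W) :
    chi t (l.map (fun r => y⁻¹ * r * y)) = chi (y * t * y⁻¹) l := by
  apply chi_congr_mem (by simp)
  intro k hk
  simp only [List.getElem_map]
  constructor
  · intro h; rw [← h]; group
  · intro h; rw [h]; group

lemma chi_map_conj2 (t y : W) (l : List W) :
    chi t (l.map (fun r => y * r * y⁻¹)) = chi (y⁻¹ * t * y) l := by
  have := chi_map_conj1 t y⁻¹ l
  simpa using this

open Classical in
lemma chi_eq_zero_of_not_mem {t : W} {l : List W} (h : t ∉ l) : chi t l = 0 := by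
  induction l with
  | nil => rfl
  | cons a l ih =>
    rw [chi_cons, if_neg (by intro he; exact h (he ▸ mem_cons_self)),
      ih (fun hm => h (mem_cons_of_mem a hm)), add_zero]

/-! ### The sign permutation representation -/

open Classical in
/-- Underlying function of the reflection-sign permutation. -/
noncomputable def muFun (i : B) : W × ZMod 2 → W × ZMod 2 :=
  fun p => (σ i * p.1 * σ i, p.2 + if p.1 = σ i then 1 else 0)

open Classical in
lemma muFun_invol (i : B) : Function.Involutive (muFun cs i) := by
  intro p
  obtain ⟨t, ε⟩ := p
  have hcond : (σ i * t * σ i = σ i) ↔ t = σ i := by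
    constructor
    · intro h
      have := congrArg (fun z => σ i * z * σ i) h
      simpa [mul_assoc, cs.simple_mul_simple_cancel_left,
        cs.simple_mul_simple_self] using this
    · intro h; rw [h, cs.simple_mul_simple_cancel_right]
  simp only [muFun]
  refine Prod.ext ?_ ?_
  · show σ i * (σ i * t * σ i) * σ i = t
    calc σ i * (σ i * t * σ i) * σ i = (σ i * σ i) * t * (σ i * σ i) := by group
    _ = t := by rw [cs.simple_mul_simple_self]; group
  · show (ε + if t = σ i then 1 else 0) + (if σ i * t * σ i = σ i then (1:ZMod 2) else 0) = ε
    by_cases h : t = σ i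
    · rw [if_pos h, if_pos (hcond.mpr h)]
      rw [add_assoc, (by decide : (1 : ZMod 2) + 1 = 0), add_zero]
    · rw [if_neg h, if_neg (fun hh => h (hcond.mp hh))]
      simp

/-- The reflection-sign permutation associated to a simple generator. -/
noncomputable def mu (i : B) : Equiv.Perm (W × ZMod 2) :=
  Function.Involutive.toPerm _ (muFun_invol cs i)

open Classical in
lemma mu_apply (i : B) (t : W) (ε : ZMod 2) :
    mu cs i (t, ε) = (σ i * t * σ i, ε + if t = σ i then 1 else 0) := rfl

open Classical in
lemma nu_apply (ω : List B) (t : W) (ε : ZMod 2) :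
    (ω.map (mu cs)).prod (t, ε)
      = (πw ω * t * (πw ω)⁻¹, ε + chi t (cs.rightInvSeq ω)) := by
  induction ω generalizing ε with
  | nil => simp [CoxeterSystem.rightInvSeq]
  | cons i ω ih =>
    have hris : cs.rightInvSeq (i :: ω) = (πw ω)⁻¹ * σ i * πw ω :: cs.rightInvSeq ω := rfl
    rw [List.map_cons, List.prod_cons, Equiv.Perm.mul_apply, ih, mu_apply,
      hris, chi_cons, cs.wordProd_cons]
    have hcond : (πw ω * t * (πw ω)⁻¹ = σ i) ↔ (t = (πw ω)⁻¹ * σ i * πw ω) := by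
      constructor
      · intro h; rw [← h]; group
      · intro h; rw [h]; group
    refine Prod.ext ?_ ?_
    · show σ i * (πw ω * t * (πw ω)⁻¹) * σ i = σ i * πw ω * t * (σ i * πw ω)⁻¹
      rw [mul_inv_rev, cs.inv_simple]
      group
    · show ε + chi t (cs.rightInvSeq ω) + (if πw ω * t * (πw ω)⁻¹ = σ i then (1:ZMod 2) else 0)
        = ε + ((if t = (πw ω)⁻¹ * σ i * πw ω then (1:ZMod 2) else 0) + chi t (cs.rightInvSeq ω))
      by_cases h : πw ω * t * (πw ω)⁻¹ = σ i
      · rw [if_pos h, if_pos (hcond.mp h)]; ring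
      · rw [if_neg h, if_neg (fun hh => h (hcond.mpr hh))]; ring

/-! ### Right inversion sequences: append formula -/

lemma rightInvSeq_append (α β : List B) :
    cs.rightInvSeq (α ++ β)
      = (cs.rightInvSeq α).map (fun r => (πw β)⁻¹ * r * πw β) ++ cs.rightInvSeq β := by
  induction α with
  | nil => simp [CoxeterSystem.rightInvSeq]
  | cons i α ih =>
    show ((πw (α ++ β))⁻¹ * σ i * πw (α ++ β)) :: cs.rightInvSeq (α ++ β) = _
    rw [ih]
    show _ = ((πw β)⁻¹ * ((πw α)⁻¹ * σ i * πw α) * πw β) :: _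
    rw [cs.wordProd_append, mul_inv_rev]
    congr 1
    group

/-! ### The dihedral computation : liftability -/

lemma drop_alternatingWord (i i' : B) (q n : ℕ) (h : q ≤ n) :
    (CoxeterSystem.alternatingWord i i' n).drop q = CoxeterSystem.alternatingWord i i' (n - q) := by
  induction q generalizing n with
  | zero => simp
  | succ q ih =>
    cases n with
    | zero => omega
    | succ n =>
      have h1 : (CoxeterSystem.alternatingWord i i' (n+1)).drop (q+1)
          = ((CoxeterSystem.alternatingWord i i' (n+1)).drop 1).drop q := by
        rw [List.drop_drop, Nat.add_comm]
      rw [h1, CoxeterSystem.alternatingWord_succ', List.drop_one, List.tail_cons,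
        ih n (by omega)]
      congr 1
      omega

lemma get?_alternatingWord (i i' : B) (n k : ℕ) (h : k < n) :
    (CoxeterSystem.alternatingWord i i' n)[k]?
      = some (if Even (n - k - 1) then i' else i) := by
  have h1 : (CoxeterSystem.alternatingWord i i' n)[k]?
      = ((CoxeterSystem.alternatingWord i i' n).drop k)[0]? := by
    rw [List.getElem?_drop, Nat.add_zero]
  rw [h1, drop_alternatingWord i i' k n (by omega)]
  obtain ⟨q, hq⟩ : ∃ q, n - k = q + 1 := ⟨n - k - 1, by omega⟩
  have hq1 : n - k - 1 = q := by omega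
  rw [hq1, hq, CoxeterSystem.alternatingWord_succ']
  rfl

lemma simple_zpow_swap (i i' : B) (a : ℤ) :
    σ i' * (σ i * σ i') ^ a = (σ i * σ i') ^ (-a) * σ i' := by
  have h1 : σ i' * (σ i * σ i') * (σ i')⁻¹ = (σ i * σ i')⁻¹ := by
    rw [cs.inv_simple, mul_inv_rev, cs.inv_simple, cs.inv_simple]
    calc σ i' * (σ i * σ i') * σ i' = σ i' * σ i * (σ i' * σ i') := by group
    _ = σ i' * σ i := by rw [cs.simple_mul_simple_self, mul_one]
  have h2 : σ i' * (σ i * σ i') ^ a * (σ i')⁻¹ = (σ i * σ i') ^ (-a) := by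
    rw [← conj_zpow, h1, inv_zpow, ← zpow_neg]
  calc σ i' * (σ i * σ i') ^ a
      = (σ i' * (σ i * σ i') ^ a * (σ i')⁻¹) * σ i' := by group
    _ = (σ i * σ i') ^ (-a) * σ i' := by rw [h2]

lemma ris_alternatingWord_getD (i i' : B) (n k : ℕ) (hk : k < n) :
    (cs.rightInvSeq (CoxeterSystem.alternatingWord i i' n)).getD k 1
      = (σ i * σ i') ^ (-((n : ℤ) - k - 1)) * σ i' := by
  rw [cs.getD_rightInvSeq, drop_alternatingWord i i' (k+1) n (by omega),
    get?_alternatingWord i i' n k hk]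
  set q := n - k - 1 with hdefq
  have hq : n - (k + 1) = q := by omega
  have hqz : -((n : ℤ) - k - 1) = -(q : ℤ) := by omega
  rw [hq, hqz, cs.prod_alternatingWord_eq_mul_pow]
  rcases Nat.even_or_odd q with he | ho
  · obtain ⟨b, hb⟩ := he
    have he : Even q := ⟨b, hb⟩
    have hq2 : q / 2 = b := by omega
    rw [if_pos he, if_pos he, hq2]
    simp only [Option.map_some, Option.getD_some, one_mul]
    rw [← zpow_natCast (σ i * σ i') b]
    generalize hzz : σ i * σ i' = z
    have hswap : ∀ a : ℤ, σ i' * z ^ a = z ^ (-a) * σ i' := by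
      rw [← hzz]; exact simple_zpow_swap cs i i'
    calc (z ^ (b:ℤ))⁻¹ * σ i' * z ^ (b:ℤ)
        = z ^ (-(b:ℤ)) * (σ i' * z ^ (b:ℤ)) := by rw [← zpow_neg]; group
      _ = z ^ (-(b:ℤ)) * (z ^ (-(b:ℤ)) * σ i') := by rw [hswap]
      _ = z ^ (-(q:ℤ)) * σ i' := by
          rw [← mul_assoc, ← zpow_add]
          congr 2
          omega
  · have hne : ¬ Even q := by rw [Nat.not_even_iff_odd]; exact ho
    obtain ⟨b, hb⟩ := ho
    have hq2 : q / 2 = b := by omega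
    rw [if_neg hne, if_neg hne, hq2]
    simp only [Option.map_some, Option.getD_some]
    rw [← zpow_natCast (σ i * σ i') b, mul_inv_rev, cs.inv_simple]
    have key : σ i' * σ i * σ i' = (σ i * σ i')⁻¹ * σ i' := by
      rw [mul_inv_rev, cs.inv_simple, cs.inv_simple]
    generalize hzz : σ i * σ i' = z
    rw [hzz] at key
    have hswap : ∀ a : ℤ, σ i' * z ^ a = z ^ (-a) * σ i' := by
      rw [← hzz]; exact simple_zpow_swap cs i i'
    calc (z ^ (b:ℤ))⁻¹ * σ i' * σ i * (σ i' * z ^ (b:ℤ))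
        = (z ^ (b:ℤ))⁻¹ * (σ i' * σ i * σ i') * z ^ (b:ℤ) := by group
      _ = (z ^ (b:ℤ))⁻¹ * (z⁻¹ * σ i') * z ^ (b:ℤ) := by rw [key]
      _ = (z ^ (b:ℤ))⁻¹ * z⁻¹ * (σ i' * z ^ (b:ℤ)) := by group
      _ = (z ^ (b:ℤ))⁻¹ * z⁻¹ * (z ^ (-(b:ℤ)) * σ i') := by rw [hswap]
      _ = (z ^ (-(b:ℤ)) * z ^ (-1:ℤ) * z ^ (-(b:ℤ))) * σ i' := by
          rw [zpow_neg, zpow_neg_one]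
          group
      _ = z ^ (-(q:ℤ)) * σ i' := by
          rw [← zpow_add, ← zpow_add]
          congr 2
          omega

lemma chi_ris_alternatingWord (i i' : B) (t : W) :
    chi t (cs.rightInvSeq (CoxeterSystem.alternatingWord i i' (2 * M i i'))) = 0 := by
  set m := M i i' with hm
  set l := cs.rightInvSeq (CoxeterSystem.alternatingWord i i' (2 * m)) with hl
  have hlen : l.length = 2 * m := by
    rw [hl, cs.length_rightInvSeq, CoxeterSystem.length_alternatingWord]
  have hzm : (σ i * σ i') ^ ((m : ℕ) : ℤ) = 1 := by
    rw [zpow_natCast, cs.simple_mul_simple_pow]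
  have hsplit : l = l.take m ++ l.drop m := (List.take_append_drop m l).symm
  have hzm' : (σ i * σ i') ^ (-((m : ℕ) : ℤ)) = 1 := by
    rw [zpow_neg, hzm, inv_one]
  have htd : l.take m = l.drop m := by
    apply List.ext_getElem
    · simp [hlen]; omega
    · intro k h1 h2
      have hk : k < m := by simp [hlen] at h1; omega
      have e1 : (l.take m)[k]'h1 = l[k]'(by omega) := by simp
      have e2 : (l.drop m)[k]'h2 = l[m+k]'(by omega) := by simp
      rw [e1, e2]
      have g1 : l[k]'(by omega) = l.getD k 1 := (l.getD_eq_getElem 1 (by omega)).symm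
      have g2 : l[m+k]'(by omega) = l.getD (m+k) 1 := (l.getD_eq_getElem 1 (by omega)).symm
      rw [g1, g2, hl, ris_alternatingWord_getD cs i i' (2*m) k (by omega),
        ris_alternatingWord_getD cs i i' (2*m) (m+k) (by omega)]
      congr 1
      have hexp : -(((2*m : ℕ):ℤ) - (k:ℤ) - 1)
          = (-(((2*m:ℕ):ℤ) - ((m + k : ℕ):ℤ) - 1)) + (-((m:ℕ):ℤ)) := by
        push_cast; ring
      rw [hexp, zpow_add, hzm', mul_one]
  calc chi t l = chi t (l.take m ++ l.drop m) := by rw [← hsplit]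
    _ = chi t (l.take m) + chi t (l.take m) := by rw [chi_append, htd]
    _ = 0 := by
        have : ∀ x : ZMod 2, x + x = 0 := by decide
        exact this _

lemma mu_liftable : M.IsLiftable (mu cs) := by
  intro i i'
  have hpow : ∀ mm : ℕ, ((mu cs i) * (mu cs i')) ^ mm
      = ((CoxeterSystem.alternatingWord i i' (2 * mm)).map (mu cs)).prod := by
    intro mm
    induction mm with
    | zero => simp [CoxeterSystem.alternatingWord]
    | succ mm ih =>
      have hw : CoxeterSystem.alternatingWord i i' (2 * (mm+1))
          = i :: i' :: CoxeterSystem.alternatingWord i i' (2 * mm) := by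
        rw [show 2 * (mm + 1) = (2 * mm + 1) + 1 by ring, CoxeterSystem.alternatingWord_succ',
          CoxeterSystem.alternatingWord_succ']
        simp [Nat.even_add_one, Nat.even_mul]
      rw [hw, pow_succ', ih, List.map_cons, List.map_cons, List.prod_cons, List.prod_cons,
        mul_assoc]
  rw [hpow]
  apply Equiv.ext
  rintro ⟨t, ε⟩
  rw [nu_apply]
  have hprod : πw (CoxeterSystem.alternatingWord i i' (2 * M i i')) = 1 := by
    rw [cs.prod_alternatingWord_eq_mul_pow, if_pos (by exact ⟨M i i', by ring⟩)]
    rw [show 2 * M i i' / 2 = M i i' by omega, cs.simple_mul_simple_pow, one_mul]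
  rw [hprod, chi_ris_alternatingWord]
  simp

/-- The sign representation homomorphism. -/
noncomputable def signHom : W →* Equiv.Perm (W × ZMod 2) :=
  cs.lift ⟨fun i => mu cs i, mu_liftable cs⟩

lemma signHom_wordProd (ω : List B) :
    signHom cs (πw ω) = (ω.map (mu cs)).prod := by
  induction ω with
  | nil => simp [cs.wordProd_nil]
  | cons i ω ih =>
    rw [cs.wordProd_cons, map_mul, ih, List.map_cons, List.prod_cons]
    congr 1
    exact cs.lift_apply_simple (mu_liftable cs) i

/-- Well-definedness: the parity of the number of occurrences of `t` in the right
inversion sequence only depends on the product of the word. -/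
lemma chi_ris_well_defined {ω ω' : List B} (h : πw ω = πw ω') (t : W) :
    chi t (cs.rightInvSeq ω) = chi t (cs.rightInvSeq ω') := by
  have h2 : (ω.map (mu cs)).prod (t, 0) = (ω'.map (mu cs)).prod (t, 0) := by
    rw [← signHom_wordProd, ← signHom_wordProd, h]
  rw [nu_apply, nu_apply] at h2
  have := congrArg Prod.snd h2
  simpa using this


/-! ### Left vs right inversion sequences -/

lemma wordProd_singleton (i : B) : πw [i] = σ i := by
  have := cs.wordProd_cons i []
  simpa [cs.wordProd_nil] using this

lemma leftInvSeq_eq_map (d : List B) :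
    cs.leftInvSeq d = (cs.rightInvSeq d).map (fun r => πw d * r * (πw d)⁻¹) := by
  apply List.ext_getElem
  · simp
  · intro k h1 h2
    have hk : k < d.length := by simpa using h1
    rw [List.getElem_map]
    have g1 : (cs.leftInvSeq d)[k]'h1 = (cs.leftInvSeq d).getD k 1 :=
      ((cs.leftInvSeq d).getD_eq_getElem 1 h1).symm
    have g2 : (cs.rightInvSeq d)[k]'(by simpa using hk)
        = (cs.rightInvSeq d).getD k 1 :=
      ((cs.rightInvSeq d).getD_eq_getElem 1 (by simpa using hk)).symm
    rw [g1, g2, cs.getD_leftInvSeq, cs.getD_rightInvSeq]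
    have hget : d[k]? = some (d[k]'hk) := by
      rw [List.getElem?_eq_getElem hk]
    rw [hget]
    simp only [Option.map_some, Option.getD_some]
    have hsplit : d = d.take k ++ d[k]'hk :: d.drop (k+1) := by
      conv_lhs => rw [← List.take_append_drop k d]
      rw [List.drop_eq_getElem_cons hk]
    have hd : πw d = πw (d.take k) * (σ (d[k]'hk) * πw (d.drop (k+1))) := by
      conv_lhs => rw [hsplit]
      rw [cs.wordProd_append, cs.wordProd_cons]
    rw [hd]
    group

lemma chi_lis (d : List B) (t : W) :
    chi t (cs.leftInvSeq d) = chi ((πw d)⁻¹ * t * πw d) (cs.rightInvSeq d) := by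
  rw [leftInvSeq_eq_map, chi_map_conj2]

lemma chi_ris_palindrome (d : List B) (p : B) :
    chi (πw d * σ p * (πw d)⁻¹) (cs.rightInvSeq (d ++ p :: d.reverse)) = 1 := by
  set t := πw d * σ p * (πw d)⁻¹ with hdeft
  rw [rightInvSeq_append, chi_append]
  have hy : πw (p :: d.reverse) = σ p * (πw d)⁻¹ := by
    rw [cs.wordProd_cons, cs.wordProd_reverse]
  have h1 : chi t ((cs.rightInvSeq d).map
      (fun r => (πw (p :: d.reverse))⁻¹ * r * πw (p :: d.reverse)))
      = chi (σ p) (cs.rightInvSeq d) := by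
    rw [chi_map_conj1]
    congr 1
    rw [hy, hdeft]
    group
  have hcons : cs.rightInvSeq (p :: d.reverse)
      = ((πw d.reverse)⁻¹ * σ p * πw d.reverse) :: cs.rightInvSeq d.reverse := rfl
  have hhead : (πw d.reverse)⁻¹ * σ p * πw d.reverse = t := by
    rw [cs.wordProd_reverse, hdeft, inv_inv]
  have h2 : chi t (cs.rightInvSeq (p :: d.reverse))
      = 1 + chi (σ p) (cs.rightInvSeq d) := by
    rw [hcons, chi_cons, hhead, if_pos rfl]
    congr 1
    rw [cs.rightInvSeq_reverse, chi_reverse, chi_lis]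
    congr 1
    rw [hdeft]
    group
  rw [h1, h2]
  have : ∀ a : ZMod 2, a + (1 + a) = 1 := by decide
  exact this _

/-! ### Strong exchange -/

theorem strong_exchange (ω : List B) (t : W) (ht : cs.IsReflection t)
    (hl : ℓ (πw ω * t) < ℓ (πw ω)) :
    ∃ j, ∃ _ : j < ω.length, πw (ω.eraseIdx j) = πw ω * t := by
  have hzo : ∀ x : ZMod 2, x = 0 ∨ x = 1 := by decide
  have hchi : chi t (cs.rightInvSeq ω) = 1 := by
    rcases hzo (chi t (cs.rightInvSeq ω)) with h0 | h1
    swap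
    · exact h1
    exfalso
    obtain ⟨x, p, htx⟩ := ht
    obtain ⟨d, hdred, hdx⟩ := cs.exists_reduced_word' x
    have htd : t = πw d * σ p * (πw d)⁻¹ := by rw [htx, hdx]
    obtain ⟨ω₂, hω₂red, hω₂⟩ := cs.exists_reduced_word' (πw ω * t)
    have hπτ : πw (d ++ p :: d.reverse) = t := by
      rw [cs.wordProd_append, cs.wordProd_cons, cs.wordProd_reverse, htd]
      group
    have hprod : πw (ω ++ (d ++ p :: d.reverse)) = πw ω₂ := by
      rw [cs.wordProd_append, hπτ, ← hω₂]
    have hwd := chi_ris_well_defined cs hprod t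
    rw [rightInvSeq_append, chi_append, chi_map_conj1] at hwd
    rw [hπτ] at hwd
    have htt : t * t * t⁻¹ = t := by group
    rw [htt, h0, zero_add] at hwd
    rw [htd] at hwd
    rw [chi_ris_palindrome cs d p] at hwd
    rw [← htd] at hwd
    -- hwd : 1 = chi t (ris ω₂)
    have hmem : t ∈ cs.rightInvSeq ω₂ := by
      by_contra hnm
      rw [chi_eq_zero_of_not_mem hnm] at hwd
      exact (by decide : (1 : ZMod 2) ≠ 0) hwd
    have hinv := cs.isRightInversion_of_mem_rightInvSeq hω₂red hmem
    have hlt2 := hinv.2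
    rw [← hω₂] at hlt2
    have hts : t * t = 1 := by
      rw [htd]
      calc πw d * σ p * (πw d)⁻¹ * (πw d * σ p * (πw d)⁻¹)
          = πw d * (σ p * σ p) * (πw d)⁻¹ := by group
        _ = 1 := by rw [cs.simple_mul_simple_self]; group
    rw [mul_assoc, hts, mul_one] at hlt2
    omega
  have hmem : t ∈ cs.rightInvSeq ω := by
    by_contra hnm
    rw [chi_eq_zero_of_not_mem hnm] at hchi
    exact (by decide : (0 : ZMod 2) ≠ 1) hchi
  obtain ⟨j, hj, hjt⟩ := List.mem_iff_getElem.mp hmem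
  have hj' : j < ω.length := by simpa using hj
  refine ⟨j, hj', ?_⟩
  rw [← cs.wordProd_mul_getD_rightInvSeq ω j]
  congr 1
  rw [(cs.rightInvSeq ω).getD_eq_getElem 1 hj, hjt]

/-! ### Deletion: every word has a reduced sublist with the same product -/

theorem exists_reduced_sublist (ω : List B) :
    ∃ e, e.Sublist ω ∧ cs.IsReduced e ∧ πw e = πw ω := by
  induction ω using List.reverseRecOn with
  | nil =>
    refine ⟨[], Sublist.refl _, ?_, rfl⟩
    show ℓ (πw []) = ([] : List B).length
    rw [cs.wordProd_nil]
    simp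
  | append_singleton ω₀ k ih =>
    obtain ⟨h, hsub, hred, hprod⟩ := ih
    have hπ : πw (ω₀ ++ [k]) = πw ω₀ * σ k := by
      rw [cs.wordProd_append, wordProd_singleton]
    rcases cs.length_mul_simple (πw h) k with hup | hdown
    · refine ⟨h ++ [k], hsub.append (Sublist.refl [k]), ?_, ?_⟩
      · show ℓ (πw (h ++ [k])) = (h ++ [k]).length
        rw [cs.wordProd_append, wordProd_singleton, hup, hred]
        simp
      · rw [cs.wordProd_append, wordProd_singleton, hπ, hprod]
    · have hlt : ℓ (πw h * σ k) < ℓ (πw h) := by omega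
      obtain ⟨j, hj, hjp⟩ := strong_exchange cs h (σ k) (cs.isReflection_simple k) hlt
      refine ⟨h.eraseIdx j, ((h.eraseIdx_sublist j).trans hsub).trans
        (List.sublist_append_left ω₀ [k]), ?_, ?_⟩
      · show ℓ (πw (h.eraseIdx j)) = (h.eraseIdx j).length
        rw [hjp, List.length_eraseIdx, if_pos hj]
        have hh : ℓ (πw h) = h.length := hred
        omega
      · rw [hjp, hπ, hprod]


/-! ### Chains of reflections (Bruhat order) -/

/-- `Chain cs u v` : one can go from `v` down to `u` by successively multiplying by
reflections, decreasing the length each time. -/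
inductive Chain (cs : CoxeterSystem M W) : W → W → Prop
  | refl (v : W) : Chain cs v v
  | down {u v : W} (t : W) (ht : cs.IsReflection t)
      (hl : cs.length (v * t) < cs.length v)
      (hc : Chain cs u (v * t)) : Chain cs u v

theorem chain_subword {u v : W} (hch : Chain cs u v) :
    ∀ ω, cs.IsReduced ω → πw ω = v →
      ∃ e, e.Sublist ω ∧ cs.IsReduced e ∧ πw e = u := by
  induction hch with
  | refl => exact fun ω h hp => ⟨ω, Sublist.refl ω, h, hp⟩
  | down t hrt hlt hch ih =>
    intro ω hred hπ
    obtain ⟨j, hj, hjp⟩ := strong_exchange cs ω t hrt (by rw [hπ]; exact hlt)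
    obtain ⟨h, hsub, hredh, hπh⟩ := exists_reduced_sublist cs (ω.eraseIdx j)
    obtain ⟨e, hesub, herede, heprod⟩ := ih h hredh (by rw [hπh, hjp, hπ])
    exact ⟨e, hesub.trans (hsub.trans (ω.eraseIdx_sublist j)), herede, heprod⟩

lemma sublist_concat_cases {e l : List B} {k : B} (h : e.Sublist (l ++ [k])) :
    e.Sublist l ∨ ∃ e₀, e = e₀ ++ [k] ∧ e₀.Sublist l := by
  rw [List.sublist_append_iff] at h
  obtain ⟨l₁, l₂, rfl, h1, h2⟩ := h
  rcases List.sublist_singleton.mp h2 with rfl | rfl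
  · left; simpa using h1
  · right; exact ⟨l₁, rfl, h1⟩

/-- `Aprop` : the subword relation implies the chain relation. -/
def Aprop (n : ℕ) : Prop := ∀ ω : List B, ω.length ≤ n → cs.IsReduced ω →
  ∀ e, e.Sublist ω → cs.IsReduced e → Chain cs (πw e) (πw ω)

/-- `Zprop` : Deodhar's property Z. -/
def Zprop (n : ℕ) : Prop := ∀ u v : W, ∀ i : B, ℓ v < n → Chain cs u v →
  ℓ (u * σ i) = ℓ u + 1 → ℓ (v * σ i) = ℓ v + 1 → Chain cs (u * σ i) (v * σ i)

theorem AZ : ∀ n, Aprop cs n ∧ Zprop cs n := by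
  intro n
  induction n using Nat.strong_induction_on with
  | _ n ih =>
  have hZ : Zprop cs n := by
    intro u v i hv hch hu hvs
    cases hch with
    | refl => exact Chain.refl _
    | down t hrt hlt hch1 =>
      rcases cs.length_mul_simple (v * t) i with hup1 | hdown1
      · -- ℓ (v t σ i) = ℓ (v t) + 1 : apply Z at a lower level, then one step
        have hch2 := (ih (ℓ (v * t) + 1) (by omega)).2 u (v * t) i (by omega) hch1 hu hup1
        have h1 : cs.IsReflection ((σ i)⁻¹ * t * (σ i)⁻¹⁻¹) := hrt.conj (σ i)⁻¹
        rw [inv_inv] at h1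
        apply Chain.down ((σ i)⁻¹ * t * σ i) h1
        · have harg : (v * σ i) * ((σ i)⁻¹ * t * σ i) = (v * t) * σ i := by group
          rw [harg, hup1, hvs]
          omega
        · have harg : (v * σ i) * ((σ i)⁻¹ * t * σ i) = (v * t) * σ i := by group
          rw [harg]
          exact hch2
      · -- ℓ (v t σ i) + 1 = ℓ (v t)
        obtain ⟨g, hgred, hgp⟩ := cs.exists_reduced_word' ((v * t) * σ i)
        have hglen : g.length = ℓ ((v * t) * σ i) := by rw [hgp]; exact hgred.symm
        have hgi_prod : πw (g ++ [i]) = v * t := by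
          rw [cs.wordProd_append, wordProd_singleton, ← hgp,
            cs.simple_mul_simple_cancel_right]
        have hgi_red : cs.IsReduced (g ++ [i]) := by
          show ℓ (πw (g ++ [i])) = (g ++ [i]).length
          rw [hgi_prod]
          simp only [List.length_append, List.length_singleton]
          omega
        obtain ⟨f, hfsub, hfred, hfp⟩ := chain_subword cs hch1 (g ++ [i]) hgi_red hgi_prod
        rcases sublist_concat_cases hfsub with hf | ⟨f₀, hfe, hf₀⟩
        · -- f <+ g : go down to (v*t)*σ i, apply Z twice lower, then climb
          have hch3 : Chain cs u ((v * t) * σ i) := by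
            have := (ih (ℓ (v * t)) (by omega)).1 g (by omega) hgred f hf hfred
            rwa [hfp, ← hgp] at this
          have hch4 : Chain cs (u * σ i) (v * t) := by
            have h5 := (ih (ℓ (v * t)) (by omega)).2 u ((v * t) * σ i) i (by omega) hch3 hu
              (by rw [cs.simple_mul_simple_cancel_right]; omega)
            rwa [cs.simple_mul_simple_cancel_right] at h5
          have hch5 : Chain cs (u * σ i) v := Chain.down t hrt hlt hch4
          apply Chain.down (σ i) (cs.isReflection_simple i)
          · rw [cs.simple_mul_simple_cancel_right]
            omega
          · rw [cs.simple_mul_simple_cancel_right]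
            exact hch5
        · -- f = f₀ ++ [i] : contradicts ℓ (u σ i) = ℓ u + 1
          exfalso
          have hfπ : πw f = πw f₀ * σ i := by
            rw [hfe, cs.wordProd_append, wordProd_singleton]
          have hlenf : ℓ (πw f) = f₀.length + 1 := by
            have : ℓ (πw f) = f.length := hfred
            rw [this, hfe]
            simp
          have husi : u * σ i = πw f₀ := by
            rw [← hfp, hfπ, cs.simple_mul_simple_cancel_right]
          have hle : ℓ (u * σ i) ≤ f₀.length := by
            rw [husi]
            exact cs.length_wordProd_le f₀
          have hu2 : ℓ u = f₀.length + 1 := by rw [← hfp]; exact hlenf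
          omega
  have hA : Aprop cs n := by
    intro ω hn hred e hsub hrede
    rcases List.eq_nil_or_concat ω with rfl | ⟨ω₀, k, hcc⟩
    · have : e = [] := List.sublist_nil.mp hsub
      subst this
      exact Chain.refl _
    · rw [List.concat_eq_append] at hcc
      subst hcc
      have hω₀red : cs.IsReduced ω₀ := by
        have := hred.take ω₀.length
        rwa [List.take_left] at this
      have hπ : πw (ω₀ ++ [k]) = πw ω₀ * σ k := by
        rw [cs.wordProd_append, wordProd_singleton]
      have hlen0 : ω₀.length + 1 ≤ n := by
        have := hn
        simpa using this
      have hcancel : πw (ω₀ ++ [k]) * σ k = πw ω₀ := by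
        rw [hπ, cs.simple_mul_simple_cancel_right]
      have hlω : ℓ (πw (ω₀ ++ [k])) = ω₀.length + 1 := by
        have : ℓ (πw (ω₀ ++ [k])) = (ω₀ ++ [k]).length := hred
        simpa using this
      have hlω₀ : ℓ (πw ω₀) = ω₀.length := hω₀red
      rcases sublist_concat_cases hsub with he | ⟨e₀, rfl, he₀⟩
      · have hch := (ih (n-1) (by omega)).1 ω₀ (by omega) hω₀red e he hrede
        apply Chain.down (σ k) (cs.isReflection_simple k)
        · rw [hcancel]
          omega
        · rw [hcancel]
          exact hch
      · have he₀red : cs.IsReduced e₀ := by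
          have := hrede.take e₀.length
          rwa [List.take_left] at this
        have hch := (ih (n-1) (by omega)).1 ω₀ (by omega) hω₀red e₀ he₀ he₀red
        have hπe : πw (e₀ ++ [k]) = πw e₀ * σ k := by
          rw [cs.wordProd_append, wordProd_singleton]
        have hlee : ℓ (πw (e₀ ++ [k])) = e₀.length + 1 := by
          have : ℓ (πw (e₀ ++ [k])) = (e₀ ++ [k]).length := hrede
          simpa using this
        have hle₀ : ℓ (πw e₀) = e₀.length := he₀red
        have := hZ (πw e₀) (πw ω₀) k (by omega) hch
          (by rw [← hπe]; omega) (by rw [← hπ]; omega)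
        rw [← hπe, ← hπ] at this
        exact this
  exact ⟨hA, hZ⟩

/-- Subword property: transfer a reduced sublist between two reduced words with
the same product. -/
theorem subword_transfer {ω ω' e : List B} (hred : cs.IsReduced ω) (hred' : cs.IsReduced ω')
    (hππ : πw ω = πw ω') (hsub : e.Sublist ω) (hrede : cs.IsReduced e) :
    ∃ e', e'.Sublist ω' ∧ cs.IsReduced e' ∧ πw e' = πw e := by
  have hch : Chain cs (πw e) (πw ω) := (AZ cs ω.length).1 ω le_rfl hred e hsub hrede
  exact chain_subword cs hch ω' hred' hππ.symm

/-- The lifting property, in subword form. -/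
theorem lift_lemma {ω e : List B} {i : B} (hred : cs.IsReduced ω)
    (hdesc : ℓ (πw ω * σ i) < ℓ (πw ω))
    (hsub : e.Sublist ω) (hrede : cs.IsReduced e)
    (hup : ℓ (πw e * σ i) = ℓ (πw e) + 1) :
    ∃ e', e'.Sublist ω ∧ cs.IsReduced e' ∧ πw e' = πw e * σ i := by
  obtain ⟨g, hgred, hgp⟩ := cs.exists_reduced_word' (πw ω * σ i)
  have hglen : g.length = ℓ (πw ω * σ i) := by rw [hgp]; exact hgred.symm
  have hgi_prod : πw (g ++ [i]) = πw ω := by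
    rw [cs.wordProd_append, wordProd_singleton, ← hgp, cs.simple_mul_simple_cancel_right]
  have hd2 : ℓ (πw ω * σ i) + 1 = ℓ (πw ω) := by
    rcases cs.length_mul_simple (πw ω) i with h | h <;> omega
  have hgi_red : cs.IsReduced (g ++ [i]) := by
    show ℓ (πw (g ++ [i])) = (g ++ [i]).length
    rw [hgi_prod]
    simp only [List.length_append, List.length_singleton]
    omega
  obtain ⟨f, hfsub, hfred, hfp⟩ := subword_transfer cs hred hgi_red hgi_prod.symm hsub hrede
  rcases sublist_concat_cases hfsub with hf | ⟨f₀, hfe, hf₀⟩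
  · -- f <+ g : then f ++ [i] works inside g ++ [i]
    have hfired : cs.IsReduced (f ++ [i]) := by
      show ℓ (πw (f ++ [i])) = (f ++ [i]).length
      rw [cs.wordProd_append, wordProd_singleton, hfp, hup]
      have : ℓ (πw f) = f.length := hfred
      rw [hfp] at this
      simp only [List.length_append, List.length_singleton]
      omega
    have hfiprod : πw (f ++ [i]) = πw e * σ i := by
      rw [cs.wordProd_append, wordProd_singleton, hfp]
    obtain ⟨e', he'sub, he'red, he'p⟩ := subword_transfer cs hgi_red hred hgi_prod
      (hf.append (Sublist.refl [i])) hfired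
    exact ⟨e', he'sub, he'red, by rw [he'p, hfiprod]⟩
  · -- f = f₀ ++ [i] : contradiction with hup
    exfalso
    have hfπ : πw f = πw f₀ * σ i := by
      rw [hfe, cs.wordProd_append, wordProd_singleton]
    have hlenf : ℓ (πw f) = f₀.length + 1 := by
      have : ℓ (πw f) = f.length := hfred
      rw [this, hfe]
      simp
    have hesi : πw e * σ i = πw f₀ := by
      rw [← hfp, hfπ, cs.simple_mul_simple_cancel_right]
    have hle : ℓ (πw e * σ i) ≤ f₀.length := by
      rw [hesi]
      exact cs.length_wordProd_le f₀
    have hu2 : ℓ (πw e) = f₀.length + 1 := by rw [← hfp]; exact hlenf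
    omega


/-! ### The key construction -/

theorem key (a : List B) (ha : cs.IsReduced a) :
    ∀ b : List B, cs.IsReduced b →
    ∃ c, c.Sublist b ∧ cs.IsReduced (a ++ c) ∧
      ∃ e, e.Sublist (a ++ c) ∧ cs.IsReduced e ∧ πw e = πw a * πw b := by
  intro b
  induction b using List.reverseRecOn with
  | nil =>
    intro _
    refine ⟨[], Sublist.refl _, by simpa using ha, a, by simp, ha, ?_⟩
    rw [cs.wordProd_nil, mul_one]
  | append_singleton b₀ i ihb =>
    intro hb
    have hb₀ : cs.IsReduced b₀ := by
      have := hb.take b₀.length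
      rwa [List.take_left] at this
    obtain ⟨c, hcsub, hacred, e, hesub, hered, heprod⟩ := ihb hb₀
    have hπbi : πw (b₀ ++ [i]) = πw b₀ * σ i := by
      rw [cs.wordProd_append, wordProd_singleton]
    have hacl : ℓ (πw (a ++ c)) = (a ++ c).length := hacred
    rw [List.length_append] at hacl
    have hel : ℓ (πw e) = e.length := hered
    rcases cs.length_mul_simple (πw (a ++ c)) i with hupd | hdownd
    · -- extend c by i
      have hacired : cs.IsReduced ((a ++ c) ++ [i]) := by
        show ℓ (πw ((a ++ c) ++ [i])) = ((a ++ c) ++ [i]).length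
        rw [cs.wordProd_append, wordProd_singleton, hupd]
        simp only [List.length_append, List.length_singleton]
        omega
      have hccsub : (c ++ [i]).Sublist (b₀ ++ [i]) := hcsub.append (Sublist.refl [i])
      have hacassoc : a ++ (c ++ [i]) = (a ++ c) ++ [i] := (List.append_assoc a c [i]).symm
      rcases cs.length_mul_simple (πw e) i with hupe | hdowne
      · refine ⟨c ++ [i], hccsub, by rw [hacassoc]; exact hacired, e ++ [i], ?_, ?_, ?_⟩
        · rw [hacassoc]; exact hesub.append (Sublist.refl [i])
        · show ℓ (πw (e ++ [i])) = (e ++ [i]).length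
          rw [cs.wordProd_append, wordProd_singleton, hupe]
          simp only [List.length_append, List.length_singleton]
          omega
        · rw [cs.wordProd_append, wordProd_singleton, heprod, hπbi, mul_assoc]
      · have hlt : ℓ (πw e * σ i) < ℓ (πw e) := by omega
        obtain ⟨j, hj, hjp⟩ := strong_exchange cs e (σ i) (cs.isReflection_simple i) hlt
        refine ⟨c ++ [i], hccsub, by rw [hacassoc]; exact hacired, e.eraseIdx j, ?_, ?_, ?_⟩
        · rw [hacassoc]
          exact ((e.eraseIdx_sublist j).trans hesub).trans (List.sublist_append_left _ [i])
        · show ℓ (πw (e.eraseIdx j)) = (e.eraseIdx j).length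
          rw [hjp, List.length_eraseIdx, if_pos hj]
          omega
        · rw [hjp, heprod, hπbi, mul_assoc]
    · -- keep c
      have hcsub' : c.Sublist (b₀ ++ [i]) := hcsub.trans (List.sublist_append_left b₀ [i])
      rcases cs.length_mul_simple (πw e) i with hupe | hdowne
      · have hdesc : ℓ (πw (a ++ c) * σ i) < ℓ (πw (a ++ c)) := by omega
        obtain ⟨e', he'sub, he'red, he'p⟩ := lift_lemma cs hacred hdesc hesub hered hupe
        exact ⟨c, hcsub', hacred, e', he'sub, he'red,
          by rw [he'p, heprod, hπbi, mul_assoc]⟩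
      · have hlt : ℓ (πw e * σ i) < ℓ (πw e) := by omega
        obtain ⟨j, hj, hjp⟩ := strong_exchange cs e (σ i) (cs.isReflection_simple i) hlt
        refine ⟨c, hcsub', hacred, e.eraseIdx j, (e.eraseIdx_sublist j).trans hesub, ?_, ?_⟩
        · show ℓ (πw (e.eraseIdx j)) = (e.eraseIdx j).length
          rw [hjp, List.length_eraseIdx, if_pos hj]
          omega
        · rw [hjp, heprod, hπbi, mul_assoc]

end StmtAux

namespace StmtAux

variable {B W : Type*} [Group W] {M : CoxeterMatrix B} (cs : CoxeterSystem M W)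

local prefix:100 "ℓ" => cs.length

lemma bruhatLE_refl (w : W) : bruhatLE cs w w := by
  obtain ⟨ω, hred, hπ⟩ := cs.exists_reduced_word' w
  exact ⟨ω, hred, hπ.symm, ω, Sublist.refl ω, hred, hπ.symm⟩

lemma bruhatLE_length_le {x y : W} (h : bruhatLE cs x y) : ℓ x ≤ ℓ y := by
  obtain ⟨ω, hred, hπ, ω', hsub, hred', hπ'⟩ := h
  calc ℓ x = ω'.length := by rw [← hπ']; exact hred'
    _ ≤ ω.length := hsub.length_le
    _ = ℓ y := by rw [← hπ]; exact hred.symm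

end StmtAux

/-- `uv = u ∘ v` (the Bruhat-maximum of `{u'v' : u' ≤ u, v' ≤ v}`) iff
`ℓ(uv) = ℓ(u) + ℓ(v)`. -/
theorem stmt2 {B W : Type*} [Group W] {M : CoxeterMatrix B} (cs : CoxeterSystem M W)
    (u v m : W)
    (hmem : ∃ u' v' : W, bruhatLE cs u' u ∧ bruhatLE cs v' v ∧ m = u' * v')
    (hmax : ∀ x : W, (∃ u' v' : W, bruhatLE cs u' u ∧ bruhatLE cs v' v ∧ x = u' * v') →
      bruhatLE cs x m) :
    u * v = m ↔ cs.length (u * v) = cs.length u + cs.length v := by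
  constructor
  · intro h
    obtain ⟨aa, hared, hau⟩ := cs.exists_reduced_word' u
    obtain ⟨bb, hbred, hbv⟩ := cs.exists_reduced_word' v
    obtain ⟨c, hcsub, hacred, e, hesub, hered, heprod⟩ := StmtAux.key cs aa hared bb hbred
    have heuv : cs.wordProd e = u * v := by rw [heprod, ← hau, ← hbv]
    have hcred : cs.IsReduced c := by
      have := hacred.drop aa.length
      rwa [List.drop_left] at this
    have hx : cs.wordProd (aa ++ c) = u * cs.wordProd c := by
      rw [cs.wordProd_append, ← hau]
    have hbc : bruhatLE cs (cs.wordProd c) v := ⟨bb, hbred, hbv.symm, c, hcsub, hcred, rfl⟩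
    have hmx := hmax (cs.wordProd (aa ++ c))
      ⟨u, cs.wordProd c, StmtAux.bruhatLE_refl cs u, hbc, hx⟩
    rw [← h] at hmx
    have h1 : cs.length (cs.wordProd (aa ++ c)) ≤ cs.length (u * v) :=
      StmtAux.bruhatLE_length_le cs hmx
    have h2 : cs.length (u * v) = e.length := by rw [← heuv]; exact hered
    have h3 : cs.length (cs.wordProd (aa ++ c)) = (aa ++ c).length := hacred
    have h4 : e.length ≤ (aa ++ c).length := hesub.length_le
    have h5 : e = aa ++ c := hesub.eq_of_length_le (by omega)
    have h6 : u * cs.wordProd c = u * v := by rw [← hx, ← heuv, h5]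
    have h7 : cs.wordProd c = v := mul_left_cancel h6
    have h8 : cs.length v = c.length := by rw [← h7]; exact hcred
    have h9 : cs.length u = aa.length := by rw [hau]; exact hared
    rw [h5, List.length_append] at h2
    omega
  · intro hadd
    obtain ⟨u', v', hu', hv', hm⟩ := hmem
    have h1 : cs.length m ≤ cs.length u + cs.length v := by
      calc cs.length m = cs.length (u' * v') := by rw [hm]
        _ ≤ cs.length u' + cs.length v' := cs.length_mul_le u' v'
        _ ≤ cs.length u + cs.length v :=
            add_le_add (StmtAux.bruhatLE_length_le cs hu') (StmtAux.bruhatLE_length_le cs hv')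
    have hx := hmax (u * v) ⟨u, v, StmtAux.bruhatLE_refl cs u, StmtAux.bruhatLE_refl cs v, rfl⟩
    obtain ⟨ω, hred, hπ, e, hsub, hrede, hπe⟩ := hx
    have h2 : e.length = cs.length (u * v) := by rw [← hπe]; exact hrede.symm
    have h3 : ω.length = cs.length m := by rw [← hπ]; exact hred.symm
    have h4 : e = ω := hsub.eq_of_length_le (by omega)
    rw [← hπe, h4, hπ]
end

section
/- Let (W,S) be a Coxeter system, I ⊆ S, u, v ∈ W with u ≤ v in Bruhat order, and suppose v is a minimal-length representative of its coset vW_I (i.e., ℓ(vw) = ℓ(v) + ℓ(w) for all w ∈ W_I). Then for any w ∈ W_I, uw ≤ vw in Bruhat order. -/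
/-- The standard parabolic subgroup generated by the simple reflections in `I`. -/
def parabolic {B W : Type*} [Group W] {M : CoxeterMatrix B} (cs : CoxeterSystem M W)
    (I : Set B) : Subgroup W :=
  Subgroup.closure (cs.simple '' I)

/-- The double coset `W_I w W_J`. -/
def doubleCoset {B W : Type*} [Group W] {M : CoxeterMatrix B} (cs : CoxeterSystem M W)
    (I J : Set B) (w : W) : Set W :=
  {x : W | ∃ a ∈ parabolic cs I, ∃ b ∈ parabolic cs J, x = a * w * b}


set_option linter.unusedSectionVars false


open List CoxeterSystem Classical

namespace StrongExchAux

variable {B W : Type*} [Group W] {M : CoxeterMatrix B} (cs : CoxeterSystem M W)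

local prefix:100 "s" => cs.simple
local prefix:100 "π" => cs.wordProd
local prefix:100 "ℓ" => cs.length
local prefix:100 "ris" => cs.rightInvSeq

/-- The step function of the sign representation on `W × ZMod 2`. -/
noncomputable def fE (i : B) : Function.End (W × ZMod 2) :=
  fun p => (s i * p.1 * s i, p.2 + if p.1 = s i then 1 else 0)

lemma comm_pow (i i' : B) (c : ℕ) :
    s i' * (s i * s i') ^ c = (s i' * s i) ^ c * s i' := by
  induction c with
  | zero => simp
  | succ n ih =>
    rw [pow_succ, ← mul_assoc, ih, pow_succ, mul_assoc, mul_assoc, mul_assoc]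


lemma zmod2_add_self : ∀ x : ZMod 2, x + x = 0 := by decide

lemma fE_pow_apply (i i' : B) (k : ℕ) (p : W × ZMod 2) :
    ((fE cs i * fE cs i') ^ k) p =
      ((s i * s i') ^ k * p.1 * (s i' * s i) ^ k,
        p.2 + ∑ c ∈ Finset.range (2 * k),
          (if p.1 = (s i' * s i) ^ c * s i' then (1 : ZMod 2) else 0)) := by
  induction k with
  | zero => simp; rfl
  | succ n ih =>
    rw [pow_succ']
    have happ : ∀ (g h : Function.End (W × ZMod 2)) q, (g * h) q = g (h q) := fun _ _ _ => rfl
    rw [happ, ih, happ]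
    have hfe : ∀ (j : B) (q : W × ZMod 2),
        fE cs j q = (s j * q.1 * s j, q.2 + if q.1 = s j then 1 else 0) := fun _ _ => rfl
    rw [hfe, hfe]
    dsimp only
    have hinv1 : ((s i * s i') ^ n)⁻¹ = (s i' * s i) ^ n := by
      rw [← inv_pow, mul_inv_rev, cs.inv_simple, cs.inv_simple]
    have hinv2 : ((s i' * s i) ^ n)⁻¹ = (s i * s i') ^ n := by
      rw [← inv_pow, mul_inv_rev, cs.inv_simple, cs.inv_simple]
    have habx : ∀ a b y x : W, (a * x * b = y ↔ x = a⁻¹ * y * b⁻¹) := by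
      intro a b y x
      constructor
      · intro h; rw [← h]; group
      · intro h; rw [h]; group
    have hval : ∀ c : ℕ, ((s i * s i') ^ n)⁻¹ * ((s i' * s i) ^ c * s i') * ((s i' * s i) ^ n)⁻¹
        = (s i' * s i) ^ (2 * n + c) * s i' := by
      intro c
      rw [hinv1, hinv2, mul_assoc, mul_assoc, comm_pow, ← mul_assoc, ← mul_assoc,
        ← pow_add, ← pow_add]
      congr 2
      omega
    have hcgen : ∀ c : ℕ, ((s i * s i') ^ n * p.1 * (s i' * s i) ^ n = (s i' * s i) ^ c * s i')
        ↔ (p.1 = (s i' * s i) ^ (2 * n + c) * s i') := by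
      intro c
      rw [habx, hval c]
    have hc0 : ((s i * s i') ^ n * p.1 * (s i' * s i) ^ n = s i')
        ↔ (p.1 = (s i' * s i) ^ (2 * n) * s i') := by
      have := hcgen 0
      rwa [pow_zero, one_mul, Nat.add_zero] at this
    have hc1 : (s i' * ((s i * s i') ^ n * p.1 * (s i' * s i) ^ n) * s i' = s i)
        ↔ (p.1 = (s i' * s i) ^ (2 * n + 1) * s i') := by
      rw [habx, cs.inv_simple]
      have := hcgen 1
      rwa [pow_one] at this
    refine Prod.ext ?_ ?_
    · dsimp only
      rw [pow_succ' (s i * s i') n, pow_succ (s i' * s i) n]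
      group
    · dsimp only
      rw [hc0, hc1]
      have h2 : 2 * (n + 1) = (2 * n) + 1 + 1 := by omega
      rw [h2, Finset.sum_range_succ, Finset.sum_range_succ]
      ring


lemma isLiftable : M.IsLiftable (fun i => fE cs i) := by
  intro i i'
  funext p
  show ((fE cs i * fE cs i') ^ M i i') p = p
  rw [fE_pow_apply]
  have h1 : (s i * s i') ^ M i i' = 1 := cs.simple_mul_simple_pow i i'
  have h2 : (s i' * s i) ^ M i i' = 1 := cs.simple_mul_simple_pow' i i'
  have hsum : ∑ c ∈ Finset.range (2 * M i i'),
      (if p.1 = (s i' * s i) ^ c * s i' then (1 : ZMod 2) else 0) = 0 := by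
    rw [two_mul, Finset.sum_range_add]
    have hshift : ∀ c : ℕ, (if p.1 = (s i' * s i) ^ (M i i' + c) * s i' then (1 : ZMod 2) else 0)
        = (if p.1 = (s i' * s i) ^ c * s i' then (1 : ZMod 2) else 0) := by
      intro c
      rw [pow_add, h2, one_mul]
    simp only [hshift]
    exact zmod2_add_self _
  rw [h1, h2, hsum, one_mul, mul_one, add_zero]

/-- The parity homomorphism. -/
noncomputable def phi : W →* Function.End (W × ZMod 2) :=
  cs.lift ⟨fun i => fE cs i, isLiftable cs⟩

lemma phi_simple (i : B) : phi cs (s i) = fE cs i :=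
  cs.lift_apply_simple (isLiftable cs) i

/-- Parity count of `t` in a list. -/
noncomputable def cnt (l : List W) (t : W) : ZMod 2 :=
  (l.map (fun u => if t = u then (1 : ZMod 2) else 0)).sum

lemma cnt_concat (l : List W) (x t : W) :
    cnt (l.concat x) t = cnt l t + (if t = x then 1 else 0) := by
  simp [cnt]

lemma cnt_map_conj (l : List W) (g t : W) :
    cnt (l.map (MulAut.conj g)) t = cnt l (g⁻¹ * t * g) := by
  unfold cnt
  rw [List.map_map]
  congr 1
  apply List.map_congr_left
  intro u _
  show (if t = g * u * g⁻¹ then (1 : ZMod 2) else 0) = (if g⁻¹ * t * g = u then (1 : ZMod 2) else 0)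
  by_cases h : g⁻¹ * t * g = u
  · rw [if_pos h, if_pos (by rw [← h]; group)]
  · rw [if_neg h, if_neg (fun hc => h (by rw [hc]; group))]

lemma cnt_eq_zero_of_not_mem {l : List W} {t : W} (h : t ∉ l) : cnt l t = 0 := by
  unfold cnt
  rw [List.sum_eq_zero]
  intro x hx
  obtain ⟨u, hu, rfl⟩ := List.mem_map.mp hx
  rw [if_neg]
  rintro rfl
  exact h hu

lemma phi_wordProd (ω : List B) (p : W × ZMod 2) :
    phi cs (π ω) p = ((π ω) * p.1 * (π ω)⁻¹, p.2 + cnt (ris ω) p.1) := by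
  induction ω using List.reverseRecOn generalizing p with
  | nil =>
    simp only [wordProd_nil, rightInvSeq_nil, map_one]
    show p = _
    simp [cnt]
  | append_singleton ω i ih =>
    rw [← List.concat_eq_append, cs.wordProd_concat, map_mul]
    have happ : ∀ (g h : Function.End (W × ZMod 2)) q, (g * h) q = g (h q) := fun _ _ _ => rfl
    rw [happ, phi_simple]
    have hfe : fE cs i p = (s i * p.1 * s i, p.2 + if p.1 = s i then 1 else 0) := rfl
    rw [hfe, ih]
    dsimp only
    rw [cs.rightInvSeq_concat, cnt_concat, cnt_map_conj]
    refine Prod.ext ?_ ?_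
    · dsimp only
      rw [mul_inv_rev, cs.inv_simple]
      group
    · dsimp only
      rw [cs.inv_simple]
      ring


lemma cnt_invariant {ω ω' : List B} (h : π ω = π ω') (t : W) :
    cnt (ris ω) t = cnt (ris ω') t := by
  have h1 := phi_wordProd cs ω (t, 0)
  have h2 := phi_wordProd cs ω' (t, 0)
  rw [h, h2] at h1
  have := congrArg Prod.snd h1
  simpa using this.symm

lemma simple_mem_ris_of_descent {ω : List B} (hω : cs.IsReduced ω) {i : B}
    (h : ℓ (π ω * s i) < ℓ (π ω)) : s i ∈ ris ω := by
  obtain ⟨χ, hχred, hχ⟩ := cs.exists_reduced_word' (π ω * s i)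
  have hprod : π (χ.concat i) = π ω := by
    rw [cs.wordProd_concat, ← hχ, mul_assoc, cs.simple_mul_simple_self, mul_one]
  have hnot : s i ∉ ris χ := by
    intro hmem
    have h2 := (cs.isRightInversion_of_mem_rightInvSeq hχred hmem).2
    rw [← hχ, mul_assoc, cs.simple_mul_simple_self, mul_one] at h2
    exact lt_asymm h h2
  have hcnt : cnt (ris (χ.concat i)) (s i) = 1 := by
    rw [cs.rightInvSeq_concat, cnt_concat, cnt_map_conj, if_pos rfl, cs.inv_simple]
    have hss : s i * s i * s i = s i := by rw [cs.simple_mul_simple_self, one_mul]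
    rw [hss, cnt_eq_zero_of_not_mem hnot, zero_add]
  have hinv := cnt_invariant cs hprod (s i)
  by_contra hmem
  rw [cnt_eq_zero_of_not_mem hmem, hcnt] at hinv
  exact absurd hinv (by decide)

lemma exchange {ω : List B} (hω : cs.IsReduced ω) {i : B}
    (h : ℓ (π ω * s i) < ℓ (π ω)) :
    ∃ χ : List B, χ.Sublist ω ∧ χ.length + 1 = ω.length ∧ π χ = π ω * s i := by
  have hmem := simple_mem_ris_of_descent cs hω h
  obtain ⟨j, hj, hje⟩ := List.mem_iff_getElem.mp hmem
  have hjlen : j < ω.length := by simpa using hj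
  have hgetD : (ris ω).getD j 1 = s i := by rw [List.getD_eq_getElem _ _ hj, hje]
  refine ⟨ω.eraseIdx j, List.eraseIdx_sublist ω j, ?_, ?_⟩
  · exact List.length_eraseIdx_add_one hjlen
  · rw [← cs.wordProd_mul_getD_rightInvSeq ω j, hgetD]

lemma exists_reduced_sublist (ω : List B) :
    ∃ χ : List B, χ.Sublist ω ∧ cs.IsReduced χ ∧ π χ = π ω := by
  induction ω using List.reverseRecOn with
  | nil => exact ⟨[], List.Sublist.refl _, by simp [CoxeterSystem.IsReduced], rfl⟩
  | append_singleton ω i ih =>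
    obtain ⟨χ₀, hsub, hred, hprod⟩ := ih
    have hred' : ℓ (π χ₀) = χ₀.length := hred
    rcases cs.length_mul_simple (π χ₀) i with hup | hdown
    · refine ⟨χ₀ ++ [i], hsub.append (List.Sublist.refl [i]), ?_, ?_⟩
      · show ℓ (π (χ₀ ++ [i])) = (χ₀ ++ [i]).length
        rw [cs.wordProd_append, cs.wordProd_singleton, hup, hred']
        simp
      · rw [cs.wordProd_append, cs.wordProd_append, hprod]
    · have hlt : ℓ (π χ₀ * s i) < ℓ (π χ₀) := by omega
      obtain ⟨χ, hs2, hlen, hp2⟩ := exchange cs hred hlt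
      refine ⟨χ, (hs2.trans hsub).trans (List.sublist_append_left ω [i]), ?_, ?_⟩
      · show ℓ (π χ) = χ.length
        rw [hp2]
        omega
      · rw [hp2, hprod, cs.wordProd_append, cs.wordProd_singleton]

end StrongExchAux


/-- If `u ≤ v` and `v` is shortest in `vW_I`, then `uw ≤ vw` for every `w ∈ W_I`. -/
theorem stmt7 {B W : Type*} [Group W] {M : CoxeterMatrix B} (cs : CoxeterSystem M W)
    (I : Set B) (u v : W) (huv : bruhatLE cs u v)
    (hv : ∀ w ∈ parabolic cs I, cs.length (v * w) = cs.length v + cs.length w) :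
    ∀ w ∈ parabolic cs I, bruhatLE cs (u * w) (v * w) := by
  intro w hw
  obtain ⟨ω, hωred, hωv, ω', hsub, hω'red, hω'u⟩ := huv
  obtain ⟨η, hηred, hηw⟩ := cs.exists_reduced_word' w
  have hlen : cs.length (v * w) = cs.length v + cs.length w := hv w hw
  have hbig : cs.IsReduced (ω ++ η) := by
    show cs.length (cs.wordProd (ω ++ η)) = (ω ++ η).length
    rw [cs.wordProd_append, hωv, ← hηw, hlen, List.length_append]
    have h1 : cs.length v = ω.length := by rw [← hωv]; exact hωred
    have h2 : cs.length w = η.length := by rw [hηw]; exact hηred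
    omega
  obtain ⟨χ, hχsub, hχred, hχprod⟩ := StrongExchAux.exists_reduced_sublist cs (ω' ++ η)
  exact ⟨ω ++ η, hbig, by rw [cs.wordProd_append, hωv, ← hηw], χ,
    hχsub.trans (hsub.append (List.Sublist.refl η)), hχred,
    by rw [hχprod, cs.wordProd_append, hω'u, ← hηw]⟩
end

section
/- Let (W,S) be a Coxeter system and I ⊆ S. Suppose a, b ∈ W are minimal coset representatives in W^I and x, y ∈ W_I satisfy ax ≤ by in Bruhat order. Then there exist u, v ∈ W_I with x = uv, ℓ(x) = ℓ(u) + ℓ(v), au ≤ b, and v ≤ y. -/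
open List

namespace StrongExch

variable {B W : Type*} [Group W] {M : CoxeterMatrix B} (cs : CoxeterSystem M W)

noncomputable local instance : DecidableEq W := Classical.decEq W

local prefix:100 "s" => cs.simple
local prefix:100 "π" => cs.wordProd
local prefix:100 "ℓ" => cs.length
local prefix:100 "ris" => cs.rightInvSeq

theorem rightInvSeq_cons' (i : B) (ω : List B) :
    ris (i :: ω) = ((π ω)⁻¹ * (s i) * (π ω)) :: ris ω := rfl

theorem simple_conj_eq_simple_iff (i : B) (x : W) :
    s i * x * s i = s i ↔ x = s i := by
  constructor
  · intro h
    have := congrArg (fun z => s i * z * s i) h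
    simpa [mul_assoc, cs.simple_mul_simple_cancel_left,
      cs.simple_mul_simple_self] using this
  · rintro rfl
    simp [mul_assoc, cs.simple_mul_simple_self]

noncomputable def eta (i : B) : Equiv.Perm (W × ZMod 2) :=
  Function.Involutive.toPerm
    (fun p => (s i * p.1 * s i, p.2 + if p.1 = s i then 1 else 0))
    (by
      intro p
      simp only
      have h1 : s i * (s i * p.1 * s i) * s i = p.1 := by
        simp [mul_assoc, cs.simple_mul_simple_cancel_left, cs.simple_mul_simple_self]
      ext
      · exact h1
      · simp only [simple_conj_eq_simple_iff cs]
        split_ifs with h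
        · rw [add_assoc, (by decide : (1 + 1 : ZMod 2) = 0), add_zero]
        · simp)

theorem eta_apply (i : B) (p : W × ZMod 2) :
    eta cs i p = (s i * p.1 * s i, p.2 + if p.1 = s i then 1 else 0) := rfl

theorem conj_eq_iff (z x y : W) : x = z⁻¹ * y * z ↔ z * x * z⁻¹ = y := by
  constructor
  · rintro rfl; group
  · rintro rfl; group

theorem prod_map_eta (ω : List B) (p : W × ZMod 2) :
    (ω.map (eta cs)).prod p
      = (π ω * p.1 * (π ω)⁻¹, p.2 + (((ris ω).count p.1 : ℕ) : ZMod 2)) := by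
  induction ω generalizing p with
  | nil => simp
  | cons i ω ih =>
    rw [map_cons, prod_cons, Equiv.Perm.mul_apply, ih p, eta_apply]
    rw [rightInvSeq_cons', cs.wordProd_cons]
    ext
    · simp only
      rw [mul_inv_rev, cs.inv_simple]
      group
    · simp only
      rw [List.count_cons]
      have hiff : (((π ω)⁻¹ * s i * π ω == p.1) = true) ↔ (π ω * p.1 * (π ω)⁻¹ = s i) := by
        rw [beq_iff_eq, eq_comm]
        exact conj_eq_iff (π ω) p.1 (s i)
      simp only [hiff]
      push_cast
      split_ifs <;> ring

theorem simple_mul_pow (i j : B) (n : ℕ) :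
    s j * (s i * s j) ^ n = ((s i * s j)⁻¹) ^ n * s j := by
  induction n with
  | zero => simp
  | succ n ih =>
    rw [pow_succ' (s i * s j) n, ← mul_assoc, pow_succ' ((s i * s j)⁻¹) n]
    have h : s j * (s i * s j) = (s i * s j)⁻¹ * s j := by
      rw [mul_inv_rev, cs.inv_simple, cs.inv_simple, mul_assoc]
    rw [h, mul_assoc, ih, ← mul_assoc]

theorem rightInvSeq_alternatingWord (i j : B) (m : ℕ) :
    ris (CoxeterSystem.alternatingWord i j m)
      = ((List.range m).map (fun k => ((s i * s j) ^ k)⁻¹ * s j)).reverse := by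
  induction m with
  | zero => simp [CoxeterSystem.alternatingWord]
  | succ m ih =>
    rw [CoxeterSystem.alternatingWord_succ', rightInvSeq_cons', ih, List.range_succ]
    rw [List.map_append, List.reverse_append]
    simp only [map_cons, map_nil, reverse_cons, reverse_nil, nil_append, singleton_append]
    congr 1
    rcases Nat.even_or_odd m with he | ho
    · obtain ⟨c, rfl⟩ := he
      have h2 : (c + c) / 2 = c := by omega
      rw [if_pos ⟨c, rfl⟩, cs.prod_alternatingWord_eq_mul_pow, if_pos ⟨c, rfl⟩, h2, one_mul]
      calc ((s i * s j) ^ c)⁻¹ * s j * (s i * s j) ^ c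
          = ((s i * s j) ^ c)⁻¹ * (s j * (s i * s j) ^ c) := by rw [mul_assoc]
        _ = ((s i * s j) ^ c)⁻¹ * (((s i * s j)⁻¹) ^ c * s j) := by
              rw [simple_mul_pow cs i j c]
        _ = ((s i * s j)⁻¹) ^ c * (((s i * s j)⁻¹) ^ c * s j) := by rw [inv_pow]
        _ = (((s i * s j)⁻¹) ^ (c + c)) * s j := by rw [pow_add]; group
        _ = ((s i * s j) ^ (c + c))⁻¹ * s j := by rw [inv_pow]
    · obtain ⟨c, rfl⟩ := ho
      have hne : ¬ Even (2 * c + 1) := by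
        rw [Nat.even_iff]; omega
      have h2 : (2 * c + 1) / 2 = c := by omega
      rw [if_neg hne, cs.prod_alternatingWord_eq_mul_pow, if_neg hne, h2]
      have e1 : (s j : W) * s i = (s i * s j)⁻¹ := by
        rw [mul_inv_rev, cs.inv_simple, cs.inv_simple]
      calc (s j * (s i * s j) ^ c)⁻¹ * s i * (s j * (s i * s j) ^ c)
          = ((s i * s j) ^ c)⁻¹ * (((s j)⁻¹ * s i * s j) * (s i * s j) ^ c) := by
            rw [mul_inv_rev]; group
        _ = ((s i * s j) ^ c)⁻¹ * ((s j * s i * s j) * (s i * s j) ^ c) := by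
            rw [cs.inv_simple]
        _ = ((s i * s j) ^ c)⁻¹ * ((s i * s j)⁻¹ * (s j * (s i * s j) ^ c)) := by
            rw [e1]; group
        _ = ((s i * s j) ^ c)⁻¹ * ((s i * s j)⁻¹ * (((s i * s j)⁻¹) ^ c * s j)) := by
            rw [simple_mul_pow cs i j c]
        _ = (((s i * s j)⁻¹) ^ (c + 1 + c)) * s j := by
            rw [pow_add, pow_add, pow_one, inv_pow]; group
        _ = ((s i * s j) ^ (2 * c + 1))⁻¹ * s j := by
            rw [inv_pow, (by omega : c + 1 + c = 2 * c + 1)]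

theorem count_ris_alternatingWord_even (i j : B) (t : W) :
    Even ((ris (CoxeterSystem.alternatingWord i j (2 * M i j))).count t) := by
  rw [rightInvSeq_alternatingWord, List.count_reverse]
  have h2 : 2 * M i j = M i j + M i j := by omega
  rw [h2, List.range_add, List.map_append, List.count_append, List.map_map]
  have hfun : ((fun k => ((s i * s j) ^ k)⁻¹ * s j) ∘ (fun k => M i j + k))
      = (fun k => ((s i * s j) ^ k)⁻¹ * s j) := by
    funext k
    simp only [Function.comp_apply]
    rw [pow_add, cs.simple_mul_simple_pow, one_mul]
  rw [hfun]
  exact ⟨_, rfl⟩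

theorem eta_liftable : CoxeterMatrix.IsLiftable M (eta cs) := by
  intro i j
  have hword : ∀ m : ℕ, ((CoxeterSystem.alternatingWord i j (2 * m)).map (eta cs)).prod
      = (eta cs i * eta cs j) ^ m := by
    intro m
    induction m with
    | zero => simp [CoxeterSystem.alternatingWord]
    | succ m ih =>
      have h1 : 2 * (m + 1) = (2 * m + 1) + 1 := by omega
      rw [h1, CoxeterSystem.alternatingWord_succ' i j (2 * m + 1),
        if_neg (by rw [Nat.even_iff]; omega : ¬ Even (2 * m + 1)),
        CoxeterSystem.alternatingWord_succ' i j (2 * m),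
        if_pos (by rw [Nat.even_iff]; omega : Even (2 * m))]
      rw [List.map_cons, List.map_cons, List.prod_cons, List.prod_cons, ih,
        pow_succ' (eta cs i * eta cs j) m, mul_assoc]
  have key := hword (M i j)
  apply Equiv.ext
  intro p
  rw [← key, prod_map_eta]
  have hπ : π (CoxeterSystem.alternatingWord i j (2 * M i j)) = 1 := by
    rw [cs.prod_alternatingWord_eq_mul_pow,
      if_pos (by rw [Nat.even_iff]; omega : Even (2 * M i j)), one_mul,
      (by omega : 2 * M i j / 2 = M i j), cs.simple_mul_simple_pow]
  have hcount : (((ris (CoxeterSystem.alternatingWord i j (2 * M i j))).count p.1 : ℕ)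
      : ZMod 2) = 0 := by
    obtain ⟨c, hc⟩ := count_ris_alternatingWord_even cs i j p.1
    rw [hc]
    push_cast
    ring_nf
    rw [(by decide : (2 : ZMod 2) = 0)]
    ring
  rw [hπ, hcount]
  simp

noncomputable def mu : W →* Equiv.Perm (W × ZMod 2) := cs.lift ⟨eta cs, eta_liftable cs⟩

theorem mu_simple (i : B) : mu cs (s i) = eta cs i := cs.lift_apply_simple (eta_liftable cs) i

theorem mu_wordProd (ω : List B) : mu cs (π ω) = (ω.map (eta cs)).prod := by
  unfold CoxeterSystem.wordProd
  rw [map_list_prod, List.map_map]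
  congr 1
  apply List.map_congr_left
  intro i _
  exact mu_simple cs i

noncomputable def nn (w t : W) : ZMod 2 := ((mu cs w) (t, 0)).2

theorem nn_eq_count {w : W} {ω : List B} (hω : π ω = w) (t : W) :
    nn cs w t = (((ris ω).count t : ℕ) : ZMod 2) := by
  unfold nn
  rw [← hω, mu_wordProd, prod_map_eta]
  simp

theorem mu_apply (w : W) (p : W × ZMod 2) :
    mu cs w p = (w * p.1 * w⁻¹, p.2 + nn cs w p.1) := by
  obtain ⟨ω, rfl⟩ := cs.wordProd_surjective w
  rw [mu_wordProd, prod_map_eta, nn_eq_count cs rfl]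

theorem nn_mul (w₁ w₂ t : W) :
    nn cs (w₁ * w₂) t = nn cs w₁ (w₂ * t * w₂⁻¹) + nn cs w₂ t := by
  unfold nn
  rw [map_mul, Equiv.Perm.mul_apply, mu_apply cs w₂, mu_apply cs w₁]
  simp only
  rw [zero_add, add_comm]
  rfl

theorem zmod2_cases : ∀ a : ZMod 2, a = 0 ∨ a = 1 := by decide

theorem nn_inv (w t : W) : nn cs w⁻¹ (w * t * w⁻¹) = nn cs w t := by
  have h0 : nn cs (w⁻¹ * w) t = 0 := by
    rw [inv_mul_cancel]
    rw [nn_eq_count cs (cs.wordProd_nil) t]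
    simp
  rw [nn_mul] at h0
  have := zmod2_cases (nn cs w⁻¹ (w * t * w⁻¹))
  have := zmod2_cases (nn cs w t)
  rcases this with h1 | h1 <;> rcases ‹nn cs w⁻¹ (w * t * w⁻¹) = 0 ∨ _› with h2 | h2 <;>
    rw [h1, h2] at h0 ⊢ <;> first | rfl | (exfalso; revert h0; decide)

theorem nn_simple (i : B) (t : W) : nn cs (s i) t = if t = s i then 1 else 0 := by
  rw [nn_eq_count cs (cs.wordProd_singleton i) t]
  rw [show ris [i] = [s i] from cs.rightInvSeq_singleton i]
  rw [List.count_singleton]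
  rcases eq_or_ne t (s i) with h | h
  · simp [h]
  · simp [h, Ne.symm h]

theorem nn_reflection {t : W} (ht : cs.IsReflection t) : nn cs t t = 1 := by
  obtain ⟨u, i, rfl⟩ := ht
  set t := u * s i * u⁻¹ with hdef
  have h1 : t = u * (s i * u⁻¹) := by rw [hdef]; group
  have hconj : (s i * u⁻¹) * t * (s i * u⁻¹)⁻¹ = s i := by
    rw [hdef, mul_inv_rev, cs.inv_simple]
    group
    rw [cs.simple_mul_simple_self, one_mul]
  have hconj2 : u⁻¹ * t * u⁻¹⁻¹ = s i := by
    rw [hdef]; group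
  have step1 : nn cs t t = nn cs u (s i) + nn cs (s i * u⁻¹) t := by
    nth_rw 1 [h1]
    rw [nn_mul, hconj]
  have step2 : nn cs (s i * u⁻¹) t = 1 + nn cs u⁻¹ t := by
    rw [nn_mul, hconj2, nn_simple, if_pos rfl]
  have step3 : nn cs u⁻¹ t = nn cs u (s i) := by
    have := nn_inv cs u (u⁻¹ * t * u)
    rw [show u * (u⁻¹ * t * u) * u⁻¹ = t from by group] at this
    rw [show u⁻¹ * t * u = s i from by rw [hdef]; group] at this
    exact this
  rw [step1, step2, step3]
  rcases zmod2_cases (nn cs u (s i)) with h | h <;> rw [h] <;> decide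

theorem nn_mul_reflection {t : W} (ht : cs.IsReflection t) (w : W) :
    nn cs (w * t) t = nn cs w t + 1 := by
  rw [nn_mul, show t * t * t⁻¹ = t from by group, nn_reflection cs ht]

theorem mem_of_nn_one {w t : W} {ω : List B} (hω : π ω = w) (h : nn cs w t = 1) :
    t ∈ ris ω := by
  by_contra hmem
  rw [nn_eq_count cs hω t, List.count_eq_zero_of_not_mem hmem] at h
  exact absurd h (by decide)

theorem strongExchange {t : W} (ht : cs.IsReflection t) {ω : List B}
    (hl : ℓ (π ω * t) < ℓ (π ω)) : t ∈ ris ω := by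
  apply mem_of_nn_one cs rfl
  rcases zmod2_cases (nn cs (π ω) t) with h | h
  · exfalso
    have h2 : nn cs (π ω * t) t = 1 := by rw [nn_mul_reflection cs ht, h, zero_add]
    obtain ⟨ρ, hρred, hρ⟩ := cs.exists_reduced_word' (π ω * t)
    have hmem : t ∈ ris ρ := mem_of_nn_one cs hρ.symm h2
    have hlt := (cs.isRightInversion_of_mem_rightInvSeq hρred hmem).2
    rw [← hρ, mul_assoc, ht.mul_self, mul_one] at hlt
    omega
  · exact h

theorem strongExchange' {t : W} (ht : cs.IsReflection t) {ω : List B}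
    (hl : ℓ (π ω * t) < ℓ (π ω)) :
    ∃ j < ω.length, π (ω.eraseIdx j) = π ω * t := by
  have hmem := strongExchange cs ht hl
  obtain ⟨j, hj, hget⟩ := List.mem_iff_getElem.mp hmem
  rw [cs.length_rightInvSeq] at hj
  refine ⟨j, hj, ?_⟩
  rw [← cs.wordProd_mul_getD_rightInvSeq ω j]
  congr 1
  rw [List.getD_eq_getElem _ 1 (by rw [cs.length_rightInvSeq]; exact hj)]
  exact hget


theorem exists_reduced_sublist (ω : List B) :
    ∃ ω', ω' <+ ω ∧ cs.IsReduced ω' ∧ π ω' = π ω := by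
  induction ω using List.reverseRecOn with
  | nil => exact ⟨[], Sublist.refl _, by simp [CoxeterSystem.IsReduced], rfl⟩
  | append_singleton ω₀ i ih =>
    obtain ⟨σ, hsub, hred, hprod⟩ := ih
    have hπ : π (σ ++ [i]) = π (ω₀ ++ [i]) := by
      rw [cs.wordProd_append, cs.wordProd_append, hprod]
    by_cases hred2 : cs.IsReduced (σ ++ [i])
    · exact ⟨σ ++ [i], hsub.append (Sublist.refl _), hred2, hπ⟩
    · have hπσ : π (σ ++ [i]) = π σ * s i := by
        rw [cs.wordProd_append, cs.wordProd_singleton]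
      have hσ : ℓ (π σ) = σ.length := hred
      have hl : ℓ (π σ * s i) < ℓ (π σ) := by
        rcases cs.length_mul_simple (π σ) i with h | h
        · exfalso
          apply hred2
          unfold CoxeterSystem.IsReduced
          rw [hπσ, h, hσ]
          simp
        · omega
      obtain ⟨j, hj, hdel⟩ := strongExchange' cs (cs.isReflection_simple i) hl
      refine ⟨σ.eraseIdx j, ?_, ?_, ?_⟩
      · exact (List.eraseIdx_sublist σ j).trans
          (hsub.trans (List.sublist_append_left ω₀ [i]))
      · unfold CoxeterSystem.IsReduced
        rw [hdel]
        have h1 : ℓ (π σ * s i) = σ.length - 1 := by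
          rcases cs.length_mul_simple (π σ) i with h | h <;> omega
        have h2 : (σ.eraseIdx j).length = σ.length - 1 := by
          rw [List.length_eraseIdx]
          simp [hj]
        rw [h1, h2]
      · rw [hdel, ← hπσ, hπ]

theorem rightInvSeq_append (ω₁ ω₂ : List B) :
    ris (ω₁ ++ ω₂) = (ris ω₁).map (fun x => (π ω₂)⁻¹ * x * π ω₂) ++ ris ω₂ := by
  induction ω₁ with
  | nil => simp
  | cons i ω₁ ih =>
    rw [List.cons_append, rightInvSeq_cons', rightInvSeq_cons', ih, List.map_cons,
      List.cons_append]
    congr 1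
    rw [cs.wordProd_append, mul_inv_rev]
    group

theorem mem_parabolic_of_word (I : Set B) (ω : List B) (hω : ∀ i ∈ ω, i ∈ I) :
    π ω ∈ parabolic cs I := by
  induction ω with
  | nil => rw [cs.wordProd_nil]; exact one_mem _
  | cons i ω ih =>
    rw [cs.wordProd_cons]
    exact mul_mem (Subgroup.subset_closure ⟨i, hω i (by simp), rfl⟩)
      (ih fun j hj => hω j (by simp [hj]))

theorem exists_word_of_mem_parabolic {I : Set B} {w : W} (hw : w ∈ parabolic cs I) :
    ∃ ω : List B, (∀ i ∈ ω, i ∈ I) ∧ π ω = w := by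
  induction hw using Subgroup.closure_induction with
  | mem x hx =>
    obtain ⟨i, hi, rfl⟩ := hx
    exact ⟨[i], by simpa using hi, cs.wordProd_singleton i⟩
  | one => exact ⟨[], by simp, cs.wordProd_nil⟩
  | mul x y _ _ hx hy =>
    obtain ⟨ω₁, h1, rfl⟩ := hx
    obtain ⟨ω₂, h2, rfl⟩ := hy
    exact ⟨ω₁ ++ ω₂, by
      intro i hi
      rcases List.mem_append.mp hi with h | h
      exacts [h1 i h, h2 i h], cs.wordProd_append ω₁ ω₂⟩
  | inv x _ hx =>
    obtain ⟨ω, h1, rfl⟩ := hx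
    exact ⟨ω.reverse, fun i hi => h1 i (List.mem_reverse.mp hi), cs.wordProd_reverse ω⟩

theorem exists_reduced_word_of_mem_parabolic {I : Set B} {w : W} (hw : w ∈ parabolic cs I) :
    ∃ ω : List B, (∀ i ∈ ω, i ∈ I) ∧ cs.IsReduced ω ∧ π ω = w := by
  obtain ⟨ω, hI, rfl⟩ := exists_word_of_mem_parabolic cs hw
  obtain ⟨ω', hsub, hred, hprod⟩ := exists_reduced_sublist cs ω
  exact ⟨ω', fun i hi => hI i (hsub.subset hi), hred, hprod⟩

theorem parabolic_decomp {I : Set B} {w : W} (hw : w ∈ parabolic cs I) (hw1 : w ≠ 1) :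
    ∃ w' ∈ parabolic cs I, ∃ i ∈ I, w = w' * s i ∧ ℓ w = ℓ w' + 1 := by
  obtain ⟨ω, hI, hred, hprod⟩ := exists_reduced_word_of_mem_parabolic cs hw
  rcases List.eq_nil_or_concat ω with rfl | ⟨ω₀, i, rfl⟩
  · exfalso
    apply hw1
    rw [← hprod, cs.wordProd_nil]
  · rw [List.concat_eq_append] at *
    have hπ : w = π ω₀ * s i := by
      rw [← hprod, cs.wordProd_append, cs.wordProd_singleton]
    have hred₀ : cs.IsReduced ω₀ := by
      have := hred.take ω₀.length
      rwa [List.take_left] at this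
    refine ⟨π ω₀, mem_parabolic_of_word cs I ω₀
      (fun j hj => hI j (by simp [hj])), i, hI i (by simp), hπ, ?_⟩
    rw [← hprod]
    unfold CoxeterSystem.IsReduced at hred hred₀
    rw [hred, hred₀]
    simp

theorem length_mul_eq_of_min {I : Set B} {d : W}
    (hd : ∀ v ∈ parabolic cs I, ℓ d ≤ ℓ (d * v)) :
    ∀ v ∈ parabolic cs I, ℓ (d * v) = ℓ d + ℓ v := by
  have main : ∀ n v, v ∈ parabolic cs I → ℓ v = n → ℓ (d * v) = ℓ d + ℓ v := by
    intro n
    induction n using Nat.strong_induction_on with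
    | _ n ih =>
      intro v hv hn
      by_cases hv1 : v = 1
      · subst hv1; simp
      · obtain ⟨v', hv', i, hiI, rfl, hlen⟩ := parabolic_decomp cs hv hv1
        have hlv' : ℓ v' < n := by omega
        have ihv' := ih (ℓ v') hlv' v' hv' rfl
        have hassoc : d * (v' * s i) = (d * v') * s i := by group
        rcases cs.length_mul_simple (d * v') i with h | h
        · rw [hassoc, h, ihv', hlen]
          omega
        · exfalso
          obtain ⟨α, hαred, hα⟩ := cs.exists_reduced_word' d
          obtain ⟨η, hηI, hηred, hηprod⟩ := exists_reduced_word_of_mem_parabolic cs hv'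
          have hword : π (α ++ η) = d * v' := by
            rw [cs.wordProd_append, ← hα, hηprod]
          have hlt : ℓ (π (α ++ η) * s i) < ℓ (π (α ++ η)) := by
            rw [hword]
            omega
          have hmem := strongExchange cs (cs.isReflection_simple i) hlt
          rw [rightInvSeq_append] at hmem
          rcases List.mem_append.mp hmem with hm | hm
          · obtain ⟨x, hx, hxe⟩ := List.mem_map.mp hm
            have hxval : x = v' * s i * v'⁻¹ := by
              rw [hηprod] at hxe
              have h := (conj_eq_iff v'⁻¹ x (s i)).mpr (by simpa using hxe)
              simpa using h
            have hxpar : x ∈ parabolic cs I := by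
              rw [hxval]
              exact mul_mem (mul_mem hv'
                (Subgroup.subset_closure ⟨i, hiI, rfl⟩)) (inv_mem hv')
            have hinv := (cs.isRightInversion_of_mem_rightInvSeq hαred hx).2
            rw [← hα] at hinv
            exact absurd (hd x hxpar) (by omega)
          · have hinv := (cs.isRightInversion_of_mem_rightInvSeq hηred hm).2
            rw [hηprod] at hinv
            omega
  intro v hv
  exact main (ℓ v) v hv rfl

theorem length_mul_eq_of_noDescent {I : Set B} {a : W}
    (ha : ∀ i ∈ I, ℓ a < ℓ (a * s i)) :
    ∀ v ∈ parabolic cs I, ℓ (a * v) = ℓ a + ℓ v := by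
  have hex : ∃ n, ∃ g ∈ parabolic cs I, ℓ (a * g) = n := ⟨ℓ a, 1, one_mem _, by simp⟩
  classical
  set S : Set ℕ := {n | ∃ g ∈ parabolic cs I, ℓ (a * g) = n} with hS
  have hSne : S.Nonempty := ⟨ℓ a, 1, one_mem _, by simp⟩
  obtain ⟨g, hg, hgn⟩ := Nat.sInf_mem hSne
  have hmin : ∀ v ∈ parabolic cs I, ℓ (a * g) ≤ ℓ (a * v) := by
    intro v hv
    rw [hgn]
    exact Nat.sInf_le ⟨v, hv, rfl⟩
  have hd : ∀ v ∈ parabolic cs I, ℓ (a * g) ≤ ℓ (a * g * v) := by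
    intro v hv
    rw [mul_assoc]
    exact hmin (g * v) (mul_mem hg hv)
  have hkey := length_mul_eq_of_min cs hd
  by_cases hgone : g = 1
  · subst hgone
    intro v hv
    have := hkey v hv
    simpa using this
  · exfalso
    have hginv : g⁻¹ ∈ parabolic cs I := inv_mem hg
    have hginv1 : g⁻¹ ≠ 1 := by simpa using hgone
    obtain ⟨v', hv', i, hiI, hgeq, hglen⟩ := parabolic_decomp cs hginv hginv1
    have hgv : g = (v' * s i)⁻¹ := by rw [← hgeq, inv_inv]
    have hasi : a * s i = (a * g) * v' := by
      rw [hgv, mul_inv_rev, cs.inv_simple]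
      group
    have h1 : ℓ (a * s i) = ℓ (a * g) + ℓ v' := by rw [hasi]; exact hkey v' hv'
    have haeq : a = (a * g) * g⁻¹ := by group
    have h2 : ℓ a = ℓ (a * g) + ℓ v' + 1 := by
      conv_lhs => rw [haeq]
      rw [hkey g⁻¹ hginv, hglen]
      omega
    have := ha i hiI
    omega

/-- One step in a Bruhat chain. -/
def stepRel (u v : W) : Prop := ∃ t, cs.IsReflection t ∧ v = u * t ∧ ℓ u < ℓ v

/-- Bruhat order via chains of reflections. -/
def cLE (u v : W) : Prop := Relation.ReflTransGen (stepRel cs) u v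

theorem subword_of_cLE {u v : W} (h : cLE cs u v) :
    ∀ ω : List B, cs.IsReduced ω → π ω = v → ∃ τ, τ <+ ω ∧ cs.IsReduced τ ∧ π τ = u := by
  induction h with
  | refl =>
    intro ω hred hω
    exact ⟨ω, Sublist.refl _, hred, hω⟩
  | @tail b c hab hbc ihc =>
    intro ω hred hω
    obtain ⟨t, ht, hceq, hlen⟩ := hbc
    have hb : b = π ω * t := by
      rw [hω, hceq, mul_assoc, ht.mul_self, mul_one]
    have hlt : ℓ (π ω * t) < ℓ (π ω) := by
      rw [← hb, hω]
      exact hlen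
    obtain ⟨j, hj, hdel⟩ := strongExchange' cs ht hlt
    obtain ⟨ρ, hρsub, hρred, hρprod⟩ := exists_reduced_sublist cs (ω.eraseIdx j)
    have hρb : π ρ = b := by rw [hρprod, hdel, ← hb]
    obtain ⟨τ, hτsub, hτred, hτprod⟩ := ihc ρ hρred hρb
    exact ⟨τ, hτsub.trans (hρsub.trans (List.eraseIdx_sublist ω j)), hτred, hτprod⟩

def S1 (n : ℕ) : Prop := ∀ ω : List B, cs.IsReduced ω → ω.length ≤ n →
  ∀ ω', ω' <+ ω → cs.IsReduced ω' → cLE cs (π ω') (π ω)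

def Zp (n : ℕ) : Prop := ∀ (j : B) (u v : W), cLE cs u v → ℓ u < ℓ (s j * u) →
  ℓ v < ℓ (s j * v) → ℓ (s j * v) ≤ n → cLE cs (s j * u) (s j * v)

def Z2p (n : ℕ) : Prop := ∀ (j : B) (u v : W), cLE cs u v → ℓ u < ℓ (s j * u) →
  ℓ (s j * v) < ℓ v → ℓ v ≤ n → cLE cs (s j * u) v

theorem bigInduction : ∀ n, S1 cs n ∧ Zp cs n ∧ Z2p cs n := by
  intro n
  induction n using Nat.strong_induction_on with
  | _ n ih =>
    have hZ : Zp cs n := by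
      intro j u v hc
      induction hc with
      | refl =>
        intro _ _ _
        exact Relation.ReflTransGen.refl
      | @tail b c hab hbc ihc =>
        intro h1 h2 h3
        obtain ⟨t, ht, hceq, hlen⟩ := hbc
        by_cases hb : ℓ b < ℓ (s j * b)
        · have hsb : ℓ (s j * b) = ℓ b + 1 := by
            rcases cs.length_simple_mul b j with h | h <;> omega
          have hsc : ℓ (s j * c) = ℓ c + 1 := by
            rcases cs.length_simple_mul c j with h | h <;> omega
          have hchain := ihc h1 hb (by omega)
          refine hchain.tail ?_
          exact ⟨t, ht, by rw [hceq]; group, by omega⟩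
        · push_neg at hb
          have hne := cs.length_simple_mul_ne b j
          have hblt : ℓ (s j * b) < ℓ b := by omega
          have hsc : ℓ (s j * c) = ℓ c + 1 := by
            rcases cs.length_simple_mul c j with h | h <;> omega
          have hz2 := (ih (ℓ b) (by omega)).2.2 j u b hab h1 hblt (le_refl _)
          refine (hz2.tail ⟨t, ht, hceq, hlen⟩).tail ?_
          refine ⟨c⁻¹ * s j * c, ?_, by group, h2⟩
          have := (cs.isReflection_simple j).conj c⁻¹
          simpa using this
    have hS1 : S1 cs n := by
      intro ω hred hlen ω' hsub hred'
      cases ω with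
      | nil =>
        have : ω' = [] := List.sublist_nil.mp hsub
        subst this
        exact Relation.ReflTransGen.refl
      | cons i ω₂ =>
        have hlen2 : ω₂.length + 1 ≤ n := by simpa using hlen
        have hred₂ : cs.IsReduced ω₂ := by
          have := hred.drop 1
          simpa using this
        have hlω : ℓ (π (i :: ω₂)) = ω₂.length + 1 := by
          have : ℓ (π (i :: ω₂)) = (i :: ω₂).length := hred
          simpa using this
        have hlω₂ : ℓ (π ω₂) = ω₂.length := hred₂
        cases hsub with
        | cons _ h =>
          have hc := (ih (n - 1) (by omega)).1 ω₂ hred₂ (by omega) ω' h hred'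
          refine hc.tail ?_
          refine ⟨(π ω₂)⁻¹ * s i * π ω₂, ?_, by rw [cs.wordProd_cons]; group, by omega⟩
          have := (cs.isReflection_simple i).conj (π ω₂)⁻¹
          simpa using this
        | @cons_cons τ _ _ h =>
          have hredτ : cs.IsReduced τ := by
            have := hred'.drop 1
            simpa using this
          have hcc := (ih (n - 1) (by omega)).1 ω₂ hred₂ (by omega) τ h hredτ
          have hlτ : ℓ (π (i :: τ)) = τ.length + 1 := by
            have : ℓ (π (i :: τ)) = (i :: τ).length := hred'
            simpa using this
          have hlτ' : ℓ (π τ) = τ.length := hredτ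
          have hZc := hZ i (π τ) (π ω₂) hcc
            (by rw [← cs.wordProd_cons]; omega)
            (by rw [← cs.wordProd_cons]; omega)
            (by rw [← cs.wordProd_cons]; omega)
          rw [← cs.wordProd_cons, ← cs.wordProd_cons] at hZc
          exact hZc
    have hZ2 : Z2p cs n := by
      intro j u v hc h1 h2 h3
      obtain ⟨σ, hσred, hσ⟩ := cs.exists_reduced_word' (s j * v)
      have hσlen : σ.length = ℓ (s j * v) := by
        have : ℓ (π σ) = σ.length := hσred
        rw [← hσ] at this
        omega
      have hv : π (j :: σ) = v := by
        rw [cs.wordProd_cons, ← hσ, cs.simple_mul_simple_cancel_left]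
      have hvlen : ℓ v = ℓ (s j * v) + 1 := by
        rcases cs.length_simple_mul v j with h | h <;> omega
      have hredjσ : cs.IsReduced (j :: σ) := by
        show ℓ (π (j :: σ)) = (j :: σ).length
        rw [hv]
        simp
        omega
      obtain ⟨τ, hτsub, hτred, hτprod⟩ := subword_of_cLE cs hc (j :: σ) hredjσ hv
      cases hτsub with
      | cons _ hsubσ =>
        have hjτ : π (j :: τ) = s j * u := by rw [cs.wordProd_cons, hτprod]
        have hsulen : ℓ (s j * u) = ℓ u + 1 := by
          rcases cs.length_simple_mul u j with h' | h' <;> omega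
        have hτlen : ℓ (π τ) = τ.length := hτred
        have hredjτ : cs.IsReduced (j :: τ) := by
          show ℓ (π (j :: τ)) = (j :: τ).length
          rw [hjτ]
          simp
          rw [hτprod] at hτlen
          omega
        have hfin := hS1 (j :: σ) hredjσ (by simp; omega) (j :: τ)
          (hsubσ.cons₂ j) hredjτ
        rw [hjτ, hv] at hfin
        exact hfin
      | @cons_cons τ₁ _ _ hsubσ =>
        exfalso
        have hτ₁u : s j * π τ₁ = u := by rw [← cs.wordProd_cons]; exact hτprod
        have hτ₁ : π τ₁ = s j * u := by rw [← hτ₁u, cs.simple_mul_simple_cancel_left]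
        have hle : ℓ (s j * u) ≤ τ₁.length := by
          rw [← hτ₁]
          exact cs.length_wordProd_le τ₁
        have hℓu : ℓ u = τ₁.length + 1 := by
          have : ℓ (π (j :: τ₁)) = (j :: τ₁).length := hτred
          rw [hτprod] at this
          simpa using this
        omega
    exact ⟨hS1, hZ, hZ2⟩

theorem cLE_of_bruhatLE {u v : W} (h : bruhatLE cs u v) : cLE cs u v := by
  obtain ⟨ω, hred, hv, ω', hsub, hred', hu⟩ := h
  have := (bigInduction cs ω.length).1 ω hred (le_refl _) ω' hsub hred'
  rwa [hu, hv] at this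

end StrongExch


/-- If `a, b ∈ W^I`, `x, y ∈ W_I` and `ax ≤ by`, then `x = uv` with
`ℓ(x) = ℓ(u) + ℓ(v)`, `au ≤ b` and `v ≤ y`. -/
theorem stmt8 {B W : Type*} [Group W] {M : CoxeterMatrix B} (cs : CoxeterSystem M W)
    (I : Set B) (a b x y : W)
    (ha : ∀ s ∈ I, cs.length a < cs.length (a * cs.simple s))
    (hb : ∀ s ∈ I, cs.length b < cs.length (b * cs.simple s))
    (hx : x ∈ parabolic cs I) (hy : y ∈ parabolic cs I)
    (h : bruhatLE cs (a * x) (b * y)) :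
    ∃ u ∈ parabolic cs I, ∃ v ∈ parabolic cs I,
      x = u * v ∧ cs.length x = cs.length u + cs.length v ∧
      bruhatLE cs (a * u) b ∧ bruhatLE cs v y := by
  classical
  have hax := StrongExch.length_mul_eq_of_noDescent cs ha
  have hby := StrongExch.length_mul_eq_of_noDescent cs hb
  have hchain : StrongExch.cLE cs (a * x) (b * y) := StrongExch.cLE_of_bruhatLE cs h
  obtain ⟨β, hβred, hβ⟩ := cs.exists_reduced_word' b
  obtain ⟨η, hηI, hηred, hηprod⟩ := StrongExch.exists_reduced_word_of_mem_parabolic cs hy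
  have hβη : cs.wordProd (β ++ η) = b * y := by
    rw [cs.wordProd_append, ← hβ, hηprod]
  have hβlen : cs.length (cs.wordProd β) = β.length := hβred
  have hηlen : cs.length (cs.wordProd η) = η.length := hηred
  have hβηred : cs.IsReduced (β ++ η) := by
    show cs.length (cs.wordProd (β ++ η)) = (β ++ η).length
    rw [hβη, hby y hy, List.length_append]
    rw [← hβ] at hβlen
    rw [hηprod] at hηlen
    omega
  obtain ⟨τ, hτsub, hτred, hτprod⟩ :=
    StrongExch.subword_of_cLE cs hchain (β ++ η) hβηred hβη
  obtain ⟨τ₁, τ₂, rfl, hsub1, hsub2⟩ := List.sublist_append_iff.mp hτsub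
  set p := cs.wordProd τ₁ with hp
  set q := cs.wordProd τ₂ with hq
  have hπτ : p * q = a * x := by rw [hp, hq, ← cs.wordProd_append]; exact hτprod
  have l1 : cs.length p ≤ τ₁.length := cs.length_wordProd_le τ₁
  have l2 : cs.length q ≤ τ₂.length := cs.length_wordProd_le τ₂
  have l3 : cs.length (a * x) ≤ cs.length p + cs.length q := by
    rw [← hπτ]
    exact cs.length_mul_le p q
  have l4 : cs.length (a * x) = τ₁.length + τ₂.length := by
    have : cs.length (cs.wordProd (τ₁ ++ τ₂)) = (τ₁ ++ τ₂).length := hτred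
    rw [hτprod] at this
    simpa using this
  have hlp : cs.length p = τ₁.length := by omega
  have hlq : cs.length q = τ₂.length := by omega
  have hτ₁red : cs.IsReduced τ₁ := hlp
  have hτ₂red : cs.IsReduced τ₂ := hlq
  have hqmem : q ∈ parabolic cs I :=
    StrongExch.mem_parabolic_of_word cs I τ₂ (fun i hi => hηI i (hsub2.subset hi))
  have humem : x * q⁻¹ ∈ parabolic cs I := mul_mem hx (inv_mem hqmem)
  have hau : a * (x * q⁻¹) = p := by
    have hp2 : p = a * x * q⁻¹ := by rw [← hπτ]; group
    rw [hp2]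
    group
  refine ⟨x * q⁻¹, humem, q, hqmem, by group, ?_, ?_, ?_⟩
  · have e1 : cs.length (a * x) = cs.length a + cs.length x := hax x hx
    have e2 : cs.length (a * (x * q⁻¹)) = cs.length a + cs.length (x * q⁻¹) :=
      hax _ humem
    rw [hau] at e2
    omega
  · exact ⟨β, hβred, hβ.symm, τ₁, hsub1, hτ₁red, hau.symm ▸ rfl⟩
  · exact ⟨η, hηred, hηprod, τ₂, hsub2, hτ₂red, rfl⟩
end

section
/- Let (W,S) be a Coxeter system and u, v, x, y ∈ W. If u ≤ v and y ≤ x in Bruhat order, and x⁻¹ ≤_L u in the left weak order (i.e., ℓ(u) = ℓ(x⁻¹) + ℓ(ux)), then ux ≤ vy in Bruhat order. -/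
open List

namespace CoxAux

open CoxeterSystem

variable {B W : Type*} [Group W] {M : CoxeterMatrix B} (cs : CoxeterSystem M W)

local prefix:100 "s" => cs.simple
local prefix:100 "π" => cs.wordProd
local prefix:100 "ℓ" => cs.length
local prefix:100 "ris" => cs.rightInvSeq

open scoped Classical

lemma simple_conj_eq_simple_iff (i : B) (t : W) :
    s i * t * s i = s i ↔ t = s i := by
  rw [mul_assoc, mul_eq_left, mul_eq_one_iff_eq_inv, cs.inv_simple]

/-- The basic involution of the reflection cocycle representation. -/
noncomputable def nu (i : B) : Equiv.Perm (W × ZMod 2) :=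
  Function.Involutive.toPerm
    (fun p => (s i * p.1 * s i, p.2 + if p.1 = s i then 1 else 0))
    (by
      rintro ⟨t, z⟩
      have hs : s i * s i = 1 := cs.simple_mul_simple_self i
      have h1 : s i * (s i * t * s i) * s i = t := by
        rw [show s i * (s i * t * s i) * s i = (s i * s i) * t * (s i * s i) by group, hs]
        group
      simp only [h1, simple_conj_eq_simple_iff]
      rcases eq_or_ne t (s i) with h | h <;> simp [h]
      rw [add_assoc, show (1 : ZMod 2) + 1 = 0 from rfl, add_zero])

lemma nu_apply (i : B) (t : W) (z : ZMod 2) :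
    nu cs i (t, z) = (s i * t * s i, z + if t = s i then 1 else 0) := rfl

lemma simple_conj_pow (i i' : B) (n : ℕ) :
    s i' * (s i * s i') ^ n * s i' = ((s i * s i') ^ n)⁻¹ := by
  have key : (MulAut.conj (s i')) (s i * s i') = (s i * s i')⁻¹ := by
    simp only [MulAut.conj_apply, cs.inv_simple]
    rw [mul_inv_rev, cs.inv_simple, cs.inv_simple]
    rw [show s i' * (s i * s i') * s i' = s i' * s i * (s i' * s i') by group,
      cs.simple_mul_simple_self, mul_one]
  calc s i' * (s i * s i') ^ n * s i'
      = (MulAut.conj (s i')) ((s i * s i') ^ n) := by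
        simp [MulAut.conj_apply, cs.inv_simple]
    _ = ((s i * s i') ^ n)⁻¹ := by rw [map_pow, key, inv_pow]

lemma cond1 (i i' : B) (k : ℕ) (t : W) :
    (s i * s i') ^ k * t * ((s i * s i') ^ k)⁻¹ = s i' ↔ t = s i' * (s i * s i') ^ (2 * k) := by
  set p := s i * s i' with hp
  have h1 : (p ^ k)⁻¹ * s i' * p ^ k = s i' * p ^ (2 * k) := by
    have h2 : (p ^ k)⁻¹ = s i' * p ^ k * s i' := (simple_conj_pow cs i i' k).symm
    rw [h2]
    rw [show s i' * p ^ k * s i' * s i' * p ^ k = s i' * p ^ k * (s i' * s i') * p ^ k by group,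
      cs.simple_mul_simple_self, mul_one, mul_assoc, ← pow_add]
    ring_nf
  constructor
  · intro h
    have : t = (p ^ k)⁻¹ * s i' * p ^ k := by
      rw [← h]; group
    rw [this, h1]
  · intro h
    rw [h, ← h1]; group

lemma cond2 (i i' : B) (k : ℕ) (t : W) :
    s i' * ((s i * s i') ^ k * t * ((s i * s i') ^ k)⁻¹) * s i' = s i
      ↔ t = s i' * (s i * s i') ^ (2 * k + 1) := by
  set p := s i * s i' with hp
  have hss : s i' * s i' = 1 := cs.simple_mul_simple_self i'
  have key : (p ^ (k+1))⁻¹ * s i' * p ^ k = s i' * p ^ (2 * k + 1) := by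
    have h2 : (p ^ (k+1))⁻¹ = s i' * p ^ (k+1) * s i' := (simple_conj_pow cs i i' (k+1)).symm
    rw [h2]
    rw [show s i' * p ^ (k+1) * s i' * s i' * p ^ k = s i' * p ^ (k+1) * (s i' * s i') * p ^ k
      by group, hss, mul_one, mul_assoc, ← pow_add]
    ring_nf
  have hsis : s i' * s i * s i' = (p ^ (1:ℕ))⁻¹ * s i' := by
    rw [pow_one, hp, mul_inv_rev, cs.inv_simple, cs.inv_simple]
  have hstep : ∀ y : W, s i' * y * s i' = s i ↔ y = s i' * s i * s i' := by
    intro y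
    constructor
    · intro h
      have : s i' * (s i' * y * s i') * s i' = s i' * s i * s i' := by rw [h]
      rw [show s i' * (s i' * y * s i') * s i' = (s i' * s i') * y * (s i' * s i') by group,
        hss] at this
      simpa using this
    · intro h
      rw [h, show s i' * (s i' * s i * s i') * s i' = (s i' * s i') * s i * (s i' * s i')
        by group, hss]
      simp
  have hconj : ∀ y : W, p ^ k * t * (p ^ k)⁻¹ = y ↔ t = (p ^ k)⁻¹ * y * p ^ k := by
    intro y
    constructor
    · intro h; rw [← h]; group
    · intro h; rw [h]; group
  rw [hstep, hconj, hsis]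
  rw [show (p ^ k)⁻¹ * ((p ^ (1:ℕ))⁻¹ * s i') * p ^ k
      = (p ^ (1:ℕ) * p ^ k)⁻¹ * s i' * p ^ k by group, ← pow_add]
  rw [show 1 + k = k + 1 by ring, key]

lemma nu_mul_pow_apply (i i' : B) (k : ℕ) (t : W) (z : ZMod 2) :
    ((nu cs i * nu cs i') ^ k) (t, z)
      = ((s i * s i') ^ k * t * ((s i * s i') ^ k)⁻¹,
          z + ∑ n ∈ Finset.range (2 * k), if t = s i' * (s i * s i') ^ n then (1 : ZMod 2) else 0)
      := by
  induction k with
  | zero => simp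
  | succ k ih =>
    rw [pow_succ', Equiv.Perm.mul_apply, ih]
    rw [Equiv.Perm.mul_apply, nu_apply, nu_apply]
    set p := s i * s i' with hp
    congr 1
    · show s i * (s i' * (p ^ k * t * (p ^ k)⁻¹) * s i') * s i = p ^ (k+1) * t * (p ^ (k+1))⁻¹
      have hpinv : p⁻¹ = s i' * s i := by
        rw [hp, mul_inv_rev, cs.inv_simple, cs.inv_simple]
      calc s i * (s i' * (p ^ k * t * (p ^ k)⁻¹) * s i') * s i
          = (s i * s i') * (p ^ k * t * (p ^ k)⁻¹) * (s i' * s i) := by group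
        _ = p * (p ^ k * t * (p ^ k)⁻¹) * p⁻¹ := by rw [← hp, ← hpinv]
        _ = p ^ (k+1) * t * (p ^ (k+1))⁻¹ := by group
    · show z + (∑ n ∈ Finset.range (2 * k), if t = s i' * p ^ n then (1 : ZMod 2) else 0)
          + (if p ^ k * t * (p ^ k)⁻¹ = s i' then 1 else 0)
          + (if s i' * (p ^ k * t * (p ^ k)⁻¹) * s i' = s i then 1 else 0)
        = z + ∑ n ∈ Finset.range (2 * (k+1)), if t = s i' * p ^ n then (1 : ZMod 2) else 0
      rw [show 2 * (k + 1) = (2 * k + 1) + 1 by ring, Finset.sum_range_succ,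
        Finset.sum_range_succ]
      simp only [hp, cond1 cs i i' k t, cond2 cs i i' k t]
      ring

lemma nu_liftable : M.IsLiftable (nu cs) := by
  intro i i'
  rcases Nat.eq_zero_or_pos (M i i') with h | _
  · rw [h, pow_zero]
  apply Equiv.ext
  rintro ⟨t, z⟩
  rw [nu_mul_pow_apply, cs.simple_mul_simple_pow i i']
  set m := M i i' with hm
  have hper : ∀ n : ℕ, (s i * s i') ^ (m + n) = (s i * s i') ^ n := by
    intro n
    rw [pow_add, cs.simple_mul_simple_pow i i', one_mul]
  have hsum : (∑ n ∈ Finset.range (2 * m),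
      if t = s i' * (s i * s i') ^ n then (1 : ZMod 2) else 0) = 0 := by
    have h2m : 2 * m = m + m := by ring
    rw [h2m, Finset.range_eq_Ico,
      ← Finset.sum_Ico_consecutive _ (Nat.zero_le m) (Nat.le_add_left m m)]
    rw [Finset.sum_Ico_eq_sum_range, Finset.sum_Ico_eq_sum_range]
    simp only [Nat.sub_zero, Nat.zero_add, Nat.add_sub_cancel_left, hper, zero_add]
    exact CharTwo.add_self_eq_zero _
  rw [hsum, add_zero]
  simp

/-- The reflection cocycle homomorphism. -/
noncomputable def phi : W →* Equiv.Perm (W × ZMod 2) := cs.lift ⟨nu cs, nu_liftable cs⟩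

lemma phi_simple (i : B) : phi cs (s i) = nu cs i := cs.lift_apply_simple (nu_liftable cs) i

/-- The indicator sum of occurrences of `t` in a list. -/
noncomputable def indsum (l : List W) (t : W) : ZMod 2 :=
  (l.map (fun r => if t = r then (1 : ZMod 2) else 0)).sum

lemma indsum_nil (t : W) : indsum ([] : List W) t = 0 := rfl

lemma indsum_cons (a : W) (l : List W) (t : W) :
    indsum (a :: l) t = (if t = a then (1 : ZMod 2) else 0) + indsum l t := by
  simp [indsum]

lemma indsum_eq_zero {l : List W} {t : W} (h : t ∉ l) : indsum l t = 0 := by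
  induction l with
  | nil => rfl
  | cons a l ih =>
    rw [indsum_cons]
    have h1 : t ≠ a := fun hc => h (hc ▸ List.mem_cons_self)
    rw [if_neg h1, zero_add]
    exact ih (fun hc => h (List.mem_cons_of_mem a hc))

lemma phi_wordProd (ω : List B) (t : W) (z : ZMod 2) :
    phi cs (π ω) (t, z) = (π ω * t * (π ω)⁻¹, z + indsum (ris ω) t) := by
  induction ω with
  | nil => simp [indsum_nil]
  | cons i ω ih =>
    rw [cs.wordProd_cons, map_mul, Equiv.Perm.mul_apply, ih, phi_simple, nu_apply]
    have hris : ris (i :: ω) = (π ω)⁻¹ * s i * π ω :: ris ω := rfl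
    rw [hris, indsum_cons]
    congr 1
    · rw [mul_inv_rev, cs.inv_simple]; group
    · have hiff : π ω * t * (π ω)⁻¹ = s i ↔ t = (π ω)⁻¹ * s i * π ω := by
        constructor
        · intro h; rw [← h]; group
        · intro h; rw [h]; group
      simp only [hiff]
      ring

lemma phi_apply' (w t : W) (z : ZMod 2) :
    phi cs w (t, z) = (w * t * w⁻¹, z + (phi cs w (t, 0)).2) := by
  obtain ⟨ω, rfl⟩ := cs.wordProd_surjective w
  rw [phi_wordProd, phi_wordProd]
  simp

/-- The reflection cocycle. -/
noncomputable def cfn (w t : W) : ZMod 2 := (phi cs w (t, 0)).2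

lemma phi_apply (w t : W) (z : ZMod 2) :
    phi cs w (t, z) = (w * t * w⁻¹, z + cfn cs w t) := phi_apply' cs w t z

lemma cfn_wordProd (ω : List B) (t : W) : cfn cs (π ω) t = indsum (ris ω) t := by
  rw [cfn, phi_wordProd]; simp

lemma zmod2_eq_of_add_eq_zero {a b : ZMod 2} (h : a + b = 0) : a = b := by
  have := eq_neg_of_add_eq_zero_left h
  rwa [CharTwo.neg_eq] at this

lemma cfn_inv (w t : W) : cfn cs w⁻¹ t = cfn cs w (w⁻¹ * t * w) := by
  have h0 : phi cs w (phi cs w⁻¹ (t, 0)) = (t, 0) := by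
    rw [← Equiv.Perm.mul_apply, ← map_mul, mul_inv_cancel, map_one, Equiv.Perm.one_apply]
  rw [phi_apply, phi_apply] at h0
  simp only [zero_add, inv_inv] at h0
  have h2 := congrArg Prod.snd h0
  simp only at h2
  exact zmod2_eq_of_add_eq_zero h2

lemma cfn_reflection_self {t : W} (ht : cs.IsReflection t) : cfn cs t t = 1 := by
  obtain ⟨w, i, rfl⟩ := ht
  set t := w * s i * w⁻¹ with htdef
  have h1 : w⁻¹ * t * w = s i := by rw [htdef]; group
  have e1 : phi cs w⁻¹ (t, 0) = (s i, cfn cs w (s i)) := by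
    rw [phi_apply]
    congr 1
    · rw [inv_inv]; exact h1
    · rw [zero_add, cfn_inv, h1]
  have e2 : ∀ z : ZMod 2, phi cs (s i) (s i, z) = (s i, z + 1) := by
    intro z
    rw [phi_simple, nu_apply, if_pos rfl]
    congr 1
    rw [cs.simple_mul_simple_self, one_mul]
  have e3 : ∀ z : ZMod 2, phi cs w (s i, z) = (t, z + cfn cs w (s i)) := by
    intro z
    rw [phi_apply]
  have hexp : phi cs t = phi cs w * phi cs (s i) * phi cs w⁻¹ := by
    rw [htdef, map_mul, map_mul]
  have key : phi cs t (t, 0) = (t, 1) := by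
    rw [hexp, Equiv.Perm.mul_apply, Equiv.Perm.mul_apply, e1, e2, e3]
    congr 1
    rw [show cfn cs w (s i) + 1 + cfn cs w (s i)
      = (cfn cs w (s i) + cfn cs w (s i)) + 1 by ring, CharTwo.add_self_eq_zero, zero_add]
  rw [cfn, key]

lemma cfn_mul_reflection (w : W) {t : W} (ht : cs.IsReflection t) :
    cfn cs (w * t) t = 1 + cfn cs w t := by
  have h1 : phi cs t (t, 0) = (t, 1) := by
    rw [phi_apply, cfn_reflection_self cs ht]
    congr 1
    rw [show t * t * t⁻¹ = t by group]
  have h2 : phi cs (w * t) (t, 0) = phi cs w (t, 1) := by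
    rw [map_mul, Equiv.Perm.mul_apply, h1]
  have h3 : phi cs w (t, 1) = (w * t * w⁻¹, 1 + cfn cs w t) := phi_apply cs w t 1
  rw [cfn, h2, h3]

lemma cfn_eq_zero_of_ascent {w t : W} (ht : cs.IsReflection t) (h : ℓ w < ℓ (w * t)) :
    cfn cs w t = 0 := by
  obtain ⟨ω, hred, rfl⟩ := cs.exists_reduced_word' w
  rw [cfn_wordProd]
  apply indsum_eq_zero
  intro hmem
  exact absurd (cs.isRightInversion_of_mem_rightInvSeq hred hmem).2 (by omega)

lemma cfn_eq_one_of_descent {w t : W} (ht : cs.IsReflection t) (h : ℓ (w * t) < ℓ w) :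
    cfn cs w t = 1 := by
  have h1 : cfn cs (w * t * t) t = 1 + cfn cs (w * t) t := cfn_mul_reflection cs (w * t) ht
  have h2 : w * t * t = w := by rw [mul_assoc, ht.mul_self, mul_one]
  have h3 : cfn cs (w * t) t = 0 := by
    apply cfn_eq_zero_of_ascent cs ht
    rw [h2]; exact h
  rw [h2, h3, add_zero] at h1
  exact h1

/-- Strong exchange property (membership form). -/
theorem mem_rightInvSeq_of_descent {ω : List B} {t : W} (ht : cs.IsReflection t)
    (h : ℓ (π ω * t) < ℓ (π ω)) : t ∈ ris ω := by
  by_contra hmem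
  have h1 : cfn cs (π ω) t = 1 := cfn_eq_one_of_descent cs ht h
  rw [cfn_wordProd, indsum_eq_zero hmem] at h1
  exact absurd h1 (by decide)

/-- Strong exchange property. -/
theorem strong_exchange {ω : List B} {t : W} (ht : cs.IsReflection t)
    (h : ℓ (π ω * t) < ℓ (π ω)) :
    ∃ j, j < ω.length ∧ π (ω.eraseIdx j) = π ω * t := by
  have hmem := mem_rightInvSeq_of_descent cs ht h
  obtain ⟨j, hj, hget⟩ := List.mem_iff_getElem.mp hmem
  rw [cs.length_rightInvSeq] at hj
  refine ⟨j, hj, ?_⟩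
  rw [← cs.wordProd_mul_getD_rightInvSeq ω j]
  congr 1
  rw [List.getD_eq_getElem _ 1 (by rw [cs.length_rightInvSeq]; exact hj)]
  exact hget

/-- Deletion: every word contains a reduced sublist with the same product. -/
theorem exists_reduced_sublist : ∀ (n : ℕ) (ω : List B), ω.length ≤ n →
    ∃ ω', ω'.Sublist ω ∧ cs.IsReduced ω' ∧ π ω' = π ω := by
  intro n
  induction n with
  | zero =>
    intro ω hlen
    have : ω = [] := List.length_eq_zero_iff.mp (Nat.le_zero.mp hlen)
    subst this
    exact ⟨[], List.Sublist.refl _, by simp [CoxeterSystem.IsReduced], rfl⟩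
  | succ n ih =>
    intro ω hlen
    by_cases hred : cs.IsReduced ω
    · exact ⟨ω, List.Sublist.refl _, hred, rfl⟩
    -- find minimal non-reduced prefix
    have hex : ∃ m, ¬ cs.IsReduced (ω.take m) := ⟨ω.length, by rwa [List.take_length]⟩
    have hfs := Nat.find_spec hex
    have hpos : 0 < Nat.find hex := by
      rcases Nat.eq_zero_or_pos (Nat.find hex) with h | h
      · exfalso
        have := Nat.find_spec hex
        rw [h] at this
        exact this (by simp [CoxeterSystem.IsReduced])
      · exact h
    obtain ⟨j, hj⟩ : ∃ j, Nat.find hex = j + 1 := ⟨Nat.find hex - 1, by omega⟩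
    rw [hj] at hfs
    have hm₀spec : ¬ cs.IsReduced (ω.take (j+1)) := hfs
    have hjred : cs.IsReduced (ω.take j) := by
      by_contra hc
      exact (Nat.find_min hex (by omega : j < Nat.find hex)) hc
    have hjlt : j < ω.length := by
      by_contra hc
      push_neg at hc
      apply hm₀spec
      rw [List.take_of_length_le (by omega)]
      rwa [List.take_of_length_le hc] at hjred
    have htake : ω.take (j+1) = ω.take j ++ [ω[j]] := by
      rw [List.take_succ, List.getElem?_eq_getElem hjlt]
      rfl
    have hlentake : (ω.take j).length = j := by
      rw [List.length_take]; omega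
    have hljw : ℓ (π (ω.take j)) = j := by rw [hjred, hlentake]
    have hdesc : ℓ (π (ω.take j) * s ω[j]) < ℓ (π (ω.take j)) := by
      rcases cs.length_mul_simple (π (ω.take j)) ω[j] with h | h
      · exfalso
        apply hm₀spec
        unfold CoxeterSystem.IsReduced
        rw [htake, cs.wordProd_append, cs.wordProd_singleton, h, hljw]
        simp [hlentake] <;> omega
      · omega
    obtain ⟨k, hk, hkprod⟩ := strong_exchange cs (cs.isReflection_simple ω[j]) hdesc
    set κ := (ω.take j).eraseIdx k ++ ω.drop (j+1) with hκ
    have hκprod : π κ = π ω := by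
      rw [hκ, cs.wordProd_append, hkprod]
      conv_rhs => rw [← List.take_append_drop (j+1) ω]
      rw [cs.wordProd_append, htake, cs.wordProd_append, cs.wordProd_singleton]
    have hκsub : κ.Sublist ω := by
      conv_rhs => rw [← List.take_append_drop (j+1) ω]
      rw [htake, List.append_assoc]
      exact List.Sublist.append (List.eraseIdx_sublist _ k)
        (List.sublist_append_right _ _)
    have hκlen : κ.length ≤ n := by
      rw [hκ, List.length_append, List.length_eraseIdx]
      rw [hlentake] at hk ⊢
      rw [if_pos hk, List.length_drop]
      omega
    obtain ⟨ω', hsub, hred', hprod'⟩ := ih κ hκlen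
    exact ⟨ω', hsub.trans hκsub, hred', by rw [hprod', hκprod]⟩

/-- One step of the Bruhat chain order. -/
def brstep (u w : W) : Prop := ∃ t, cs.IsReflection t ∧ w = u * t ∧ ℓ u < ℓ w

/-- The Bruhat order, defined via chains of reflections. -/
def ble : W → W → Prop := Relation.ReflTransGen (brstep cs)

lemma ble_refl (w : W) : ble cs w w := Relation.ReflTransGen.refl

lemma ble_trans {u v w : W} (h1 : ble cs u v) (h2 : ble cs v w) : ble cs u w :=
  Relation.ReflTransGen.trans h1 h2

lemma brstep_ascent_simple {w : W} {i : B} (h : ℓ w < ℓ (w * s i)) :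
    brstep cs w (w * s i) := ⟨s i, cs.isReflection_simple i, rfl, h⟩

lemma brstep_descent_simple {w : W} {i : B} (h : ℓ (w * s i) < ℓ w) :
    brstep cs (w * s i) w :=
  ⟨s i, cs.isReflection_simple i, (cs.simple_mul_simple_cancel_right i).symm, h⟩

lemma ble_length_le {u v : W} (h : ble cs u v) : ℓ u ≤ ℓ v := by
  induction h with
  | refl => exact le_rfl
  | tail _ hbc ih =>
    obtain ⟨t, _, _, hlen⟩ := hbc
    omega

lemma ble_eq_of_length_ge {u v : W} (h : ble cs u v) (hl : ℓ v ≤ ℓ u) : u = v := by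
  rcases Relation.ReflTransGen.cases_tail h with h1 | ⟨c, hac, hcb⟩
  · exact h1.symm
  · obtain ⟨t, _, _, hlen⟩ := hcb
    have := ble_length_le cs hac
    omega

/-- Chains give subwords of every reduced word. -/
theorem exists_sublist_of_ble {u v : W} (h : ble cs u v) :
    ∀ Ω : List B, cs.IsReduced Ω → π Ω = v →
      ∃ Ω', Ω'.Sublist Ω ∧ cs.IsReduced Ω' ∧ π Ω' = u := by
  induction h with
  | refl => exact fun Ω hred hΩ => ⟨Ω, List.Sublist.refl _, hred, hΩ⟩
  | @tail b c hab hbc ih =>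
    intro Ω hred hΩ
    obtain ⟨t, ht, hc, hlen⟩ := hbc
    have hb : π Ω * t = b := by
      rw [hΩ, hc, mul_assoc, ht.mul_self, mul_one]
    have hdesc : ℓ (π Ω * t) < ℓ (π Ω) := by
      rw [hb, hΩ]; exact hlen
    obtain ⟨j, hj, hep⟩ := strong_exchange cs ht hdesc
    obtain ⟨κ, hκsub, hκred, hκprod⟩ :=
      exists_reduced_sublist cs (Ω.eraseIdx j).length (Ω.eraseIdx j) le_rfl
    obtain ⟨Ω', hsub, hred', hprod⟩ := ih κ hκred (by rw [hκprod, hep, hb])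
    exact ⟨Ω', hsub.trans (hκsub.trans (Ω.eraseIdx_sublist j)), hred', hprod⟩

/-- Key rigidity lemma: if `z` is below `w * sᵢ` via a reflection, at least as long as `w`,
and `sᵢ` is an ascent of `z`, then `z = w`. -/
lemma eq_of_brcover {w z t : W} {i : B} (ht : cs.IsReflection t)
    (hwi : ℓ w < ℓ (w * s i)) (hz : z = w * s i * t) (hzlt : ℓ z < ℓ (w * s i))
    (hwz : ℓ w ≤ ℓ z) (hzs : ℓ z < ℓ (z * s i)) : z = w := by
  obtain ⟨κ, hκred, hκ⟩ := cs.exists_reduced_word' w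
  have hwilen : ℓ (w * s i) = ℓ w + 1 := by
    rcases cs.length_mul_simple w i with h | h <;> omega
  have hΛred : cs.IsReduced (κ ++ [i]) := by
    unfold CoxeterSystem.IsReduced
    rw [cs.wordProd_append, cs.wordProd_singleton, ← hκ, hwilen, List.length_append,
      List.length_singleton, hκ, hκred]
  have hΛprod : π (κ ++ [i]) = w * s i := by
    rw [cs.wordProd_append, cs.wordProd_singleton, ← hκ]
  have hdesc : ℓ (π (κ ++ [i]) * t) < ℓ (π (κ ++ [i])) := by
    rw [hΛprod, ← hz]; exact hzlt
  obtain ⟨j, hj, hep⟩ := strong_exchange cs ht hdesc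
  rw [hΛprod, ← hz] at hep
  have hκlen : κ.length = ℓ w := by rw [← hκred, ← hκ]
  rcases Nat.lt_or_ge j κ.length with hlt | hge
  · exfalso
    rw [List.eraseIdx_append_of_lt_length hlt] at hep
    have hzs' : z * s i = π (κ.eraseIdx j) := by
      rw [← hep, cs.wordProd_append, cs.wordProd_singleton,
        cs.simple_mul_simple_cancel_right]
    have h1 : ℓ (z * s i) ≤ (κ.eraseIdx j).length := by
      rw [hzs']; exact cs.length_wordProd_le _
    rw [List.length_eraseIdx, if_pos hlt] at h1
    omega
  · have hj' : j = κ.length := by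
      rw [List.length_append, List.length_singleton] at hj
      omega
    rw [List.eraseIdx_append_of_length_le (by omega), hj'] at hep
    simp only [Nat.sub_self] at hep
    rw [show List.eraseIdx [i] 0 = [] from rfl, List.append_nil] at hep
    rw [← hep, ← hκ]

/-- The lifting properties of the Bruhat order, proven by mutual induction. -/
theorem ZF : ∀ n : ℕ, ∀ w : W, ℓ w ≤ n →
    (∀ a (i : B), ble cs a w → ℓ w < ℓ (w * s i) → ble cs (a * s i) (w * s i)) ∧
    (∀ a (i : B), ble cs a w → ℓ (w * s i) < ℓ w → ℓ a < ℓ (a * s i) → ble cs a (w * s i)) := by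
  intro n
  induction n with
  | zero =>
    intro w hw
    constructor
    · intro a i hab _
      have ha : a = w := ble_eq_of_length_ge cs hab (by omega)
      rw [ha]
      exact ble_refl cs _
    · intro a i _ hdesc _
      exact absurd hdesc (by omega)
  | succ n ih =>
    intro w hw
    constructor
    · -- Property Z
      intro a i hab hasc
      have hwlen : ℓ (w * s i) = ℓ w + 1 := by
        rcases cs.length_mul_simple w i with h | h <;> omega
      rcases Relation.ReflTransGen.cases_tail hab with heq | ⟨c, hac, hcb⟩
      · rw [heq]
        exact ble_refl cs _
      · obtain ⟨t, ht, hw_eq, hclen⟩ := hcb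
        have hcn : ℓ c ≤ n := by omega
        have hconj : cs.IsReflection (s i * t * s i) := by
          have := ht.conj (s i)
          rwa [cs.inv_simple] at this
        have hwi_eq : w * s i = (c * s i) * (s i * t * s i) := by
          rw [hw_eq, show c * s i * (s i * t * s i) = c * (s i * s i) * t * s i by group,
            cs.simple_mul_simple_self, mul_one]
        rcases cs.length_mul_simple c i with hca | hcd
        · have h1 : ble cs (a * s i) (c * s i) := (ih c hcn).1 a i hac (by omega)
          exact h1.tail ⟨s i * t * s i, hconj, hwi_eq, by omega⟩
        · rcases cs.length_mul_simple a i with haa | had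
          · have hF : ble cs a (c * s i) := (ih c hcn).2 a i hac (by omega) (by omega)
            have hcsn : ℓ (c * s i) ≤ n := by omega
            have hZ : ble cs (a * s i) ((c * s i) * s i) :=
              (ih (c * s i) hcsn).1 a i hF (by rw [cs.simple_mul_simple_cancel_right]; omega)
            rw [cs.simple_mul_simple_cancel_right] at hZ
            exact (hZ.tail ⟨t, ht, hw_eq, hclen⟩).tail (brstep_ascent_simple cs (by omega))
          · have h1 : ble cs (a * s i) a :=
              Relation.ReflTransGen.single (brstep_descent_simple cs (by omega))
            exact ((h1.trans hac).tail ⟨t, ht, hw_eq, hclen⟩).tail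
              (brstep_ascent_simple cs (by omega))
    · -- Property F
      intro a i hab hdesc hasc
      have hwlen : ℓ (w * s i) + 1 = ℓ w := by
        rcases cs.length_mul_simple w i with h | h <;> omega
      rcases Relation.ReflTransGen.cases_tail hab with heq | ⟨d, had, hdw⟩
      · rw [heq] at hdesc
        omega
      · obtain ⟨t, ht, hw_eq, hdlen⟩ := hdw
        have hdn : ℓ d ≤ n := by omega
        have hconj : cs.IsReflection (s i * t * s i) := by
          have := ht.conj (s i)
          rwa [cs.inv_simple] at this
        have hwi_eq : w * s i = (d * s i) * (s i * t * s i) := by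
          rw [hw_eq, show d * s i * (s i * t * s i) = d * (s i * s i) * t * s i by group,
            cs.simple_mul_simple_self, mul_one]
        rcases cs.length_mul_simple d i with hda | hdd
        · by_cases hc : ℓ (d * s i) < ℓ (w * s i)
          · exact (had.tail (brstep_ascent_simple cs (by omega))).tail
              ⟨s i * t * s i, hconj, hwi_eq, hc⟩
          · have hne : ℓ (w * s i) ≠ ℓ (d * s i) := by
              rw [hwi_eq]
              exact hconj.length_mul_left_ne (d * s i)
            have heq2 : w * s i = d := by
              apply eq_of_brcover cs hconj (by omega) hwi_eq (by omega) (by omega)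
              rw [cs.simple_mul_simple_cancel_right]
              omega
            rw [heq2]
            exact had
        · have hF : ble cs a (d * s i) := (ih d hdn).2 a i had (by omega) hasc
          exact hF.tail ⟨s i * t * s i, hconj, hwi_eq, by omega⟩

/-- Subwords of reduced words are below in the Bruhat order. -/
theorem ble_of_sublist : ∀ (ω : List B), cs.IsReduced ω → ∀ ω', ω'.Sublist ω →
    cs.IsReduced ω' → ble cs (π ω') (π ω) := by
  intro ω
  induction ω using List.reverseRecOn with
  | nil =>
    intro _ ω' hsub _
    rw [List.sublist_nil.mp hsub]
    exact ble_refl cs _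
  | append_singleton κ i ih =>
    intro hred ω' hsub hred'
    have hκred : cs.IsReduced κ := by
      have := hred.take κ.length
      rwa [List.take_left] at this
    have hasc : ℓ (π κ) < ℓ (π κ * s i) := by
      have h1 : ℓ (π (κ ++ [i])) = κ.length + 1 := by
        rw [hred]
        simp
      rw [cs.wordProd_append, cs.wordProd_singleton] at h1
      rw [h1, hκred]
      omega
    rcases List.sublist_append_iff.mp hsub with ⟨l₁, l₂, rfl, hl₁, hl₂⟩
    rcases List.sublist_singleton.mp hl₂ with rfl | rfl
    · rw [List.append_nil] at hred' ⊢
      have h2 := ih hκred l₁ hl₁ hred'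
      rw [cs.wordProd_append, cs.wordProd_singleton]
      exact h2.tail (brstep_ascent_simple cs hasc)
    · have hl₁red : cs.IsReduced l₁ := by
        have := hred'.take l₁.length
        rwa [List.take_left] at this
      have h2 := ih hκred l₁ hl₁ hl₁red
      have h3 := (ZF cs (ℓ (π κ)) (π κ) le_rfl).1 (π l₁) i h2 hasc
      rw [cs.wordProd_append, cs.wordProd_singleton, cs.wordProd_append, cs.wordProd_singleton]
      exact h3

lemma ble_lift_desc {y x : W} {i : B} (h : ble cs y x) (hx : ℓ (x * s i) < ℓ x)
    (hy : ℓ (y * s i) < ℓ y) : ble cs (y * s i) (x * s i) := by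
  have h1 : ble cs (y * s i) x :=
    (Relation.ReflTransGen.single (brstep_descent_simple cs hy)).trans h
  have h2 : ℓ (y * s i) < ℓ ((y * s i) * s i) := by
    rw [cs.simple_mul_simple_cancel_right]
    omega
  exact (ZF cs (ℓ x) x le_rfl).2 (y * s i) i h1 hx h2

/-- The main multiplication theorem, at the level of the chain order. -/
theorem main_ble : ∀ n (x : W), ℓ x ≤ n → ∀ u v y : W, ble cs u v → ble cs y x →
    ℓ u = ℓ x⁻¹ + ℓ (u * x) → ble cs (u * x) (v * y) := by
  intro n
  induction n with
  | zero =>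
    intro x hx u v y h1 h2 _
    have hx1 : x = 1 := cs.length_eq_zero_iff.mp (by omega)
    subst hx1
    have hy1 : y = 1 := cs.length_eq_zero_iff.mp (by
      have hll := ble_length_le cs h2
      simp only [cs.length_one] at hll
      omega)
    subst hy1
    rw [mul_one, mul_one]
    exact h1
  | succ n ih =>
    intro x hx u v y h1 h2 h3
    by_cases hx1 : x = 1
    · subst hx1
      have hy1 : y = 1 := cs.length_eq_zero_iff.mp (by
        have hll := ble_length_le cs h2
        simp only [cs.length_one] at hll
        omega)
      subst hy1
      rw [mul_one, mul_one]
      exact h1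
    · obtain ⟨i, hi⟩ := cs.exists_rightDescent_of_ne_one hx1
      have hi' : ℓ (x * s i) < ℓ x := hi
      have hxlen : ℓ (x * s i) + 1 = ℓ x := by
        rcases cs.length_mul_simple x i with h | h <;> omega
      have hx'n : ℓ (x * s i) ≤ n := by omega
      have h3' : ℓ u = ℓ x + ℓ (u * x) := by rwa [cs.length_inv] at h3
      have hux' : u * (x * s i) = (u * x) * s i := by rw [mul_assoc]
      have hcongr : ℓ (u * (x * s i)) = ℓ ((u * x) * s i) := by rw [hux']
      have huxlen : ℓ (u * (x * s i)) = ℓ (u * x) + 1 := by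
        have hle : ℓ (u * (x * s i)) ≤ ℓ (u * x) + 1 := by
          rw [hux']
          rcases cs.length_mul_simple (u * x) i with h | h <;> omega
        have hge : ℓ u ≤ ℓ (u * (x * s i)) + ℓ ((x * s i)⁻¹) := by
          calc ℓ u = ℓ ((u * (x * s i)) * (x * s i)⁻¹) := by group
            _ ≤ ℓ (u * (x * s i)) + ℓ ((x * s i)⁻¹) := cs.length_mul_le _ _
        rw [cs.length_inv] at hge
        omega
      have h3'' : ℓ u = ℓ ((x * s i)⁻¹) + ℓ (u * (x * s i)) := by
        rw [cs.length_inv]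
        omega
      have hd : ℓ ((u * (x * s i)) * s i) < ℓ (u * (x * s i)) := by
        rw [hux', cs.simple_mul_simple_cancel_right]
        omega
      rcases cs.length_mul_simple y i with hya | hyd
      · -- ascent of y
        have hyx' : ble cs y (x * s i) := (ZF cs (ℓ x) x le_rfl).2 y i h2 hi' (by omega)
        have hI := ih (x * s i) hx'n u v y h1 hyx' h3''
        have hstep : ble cs ((u * (x * s i)) * s i) (u * (x * s i)) :=
          Relation.ReflTransGen.single (brstep_descent_simple cs hd)
        have hfin := hstep.trans hI
        rwa [hux', cs.simple_mul_simple_cancel_right] at hfin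
      · -- descent of y
        have hyx' : ble cs (y * s i) (x * s i) := ble_lift_desc cs h2 hi' (by omega)
        have hI := ih (x * s i) hx'n u v (y * s i) h1 hyx' h3''
        have hvy : (v * (y * s i)) * s i = v * y := by
          rw [mul_assoc, mul_assoc, cs.simple_mul_simple_self, mul_one]
        rcases cs.length_mul_simple (v * (y * s i)) i with hBa | hBd
        · have s1 : ble cs ((u * (x * s i)) * s i) (u * (x * s i)) :=
            Relation.ReflTransGen.single (brstep_descent_simple cs hd)
          have s2 : ble cs (v * (y * s i)) ((v * (y * s i)) * s i) :=
            Relation.ReflTransGen.single (brstep_ascent_simple cs (by omega))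
          have hfin := (s1.trans hI).trans s2
          rwa [hux', cs.simple_mul_simple_cancel_right, hvy] at hfin
        · have hfin := ble_lift_desc cs hI (by omega) hd
          rwa [hux', cs.simple_mul_simple_cancel_right, hvy] at hfin

/-- The subword definition of the Bruhat order agrees with the chain definition. -/
theorem bruhatLE_iff_ble (u v : W) : _root_.bruhatLE cs u v ↔ ble cs u v := by
  constructor
  · rintro ⟨ω, hred, hprod, ω', hsub, hred', hprod'⟩
    rw [← hprod, ← hprod']
    exact ble_of_sublist cs ω hred ω' hsub hred'
  · intro h
    obtain ⟨Ω, hΩred, hΩ⟩ := cs.exists_reduced_word' v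
    obtain ⟨Ω', hsub, hred', hprod'⟩ := exists_sublist_of_ble cs h Ω hΩred hΩ.symm
    exact ⟨Ω, hΩred, hΩ.symm, Ω', hsub, hred', hprod'⟩

end CoxAux

/-- If `u ≤ v`, `y ≤ x`, and `x⁻¹ ≤_L u` in the left weak order
(`ℓ(u) = ℓ(x⁻¹) + ℓ(ux)`), then `ux ≤ vy`. -/
theorem stmt9 {B W : Type*} [Group W] {M : CoxeterMatrix B} (cs : CoxeterSystem M W)
    (u v x y : W) (h1 : bruhatLE cs u v) (h2 : bruhatLE cs y x)
    (h3 : cs.length u = cs.length x⁻¹ + cs.length (u * x)) :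
    bruhatLE cs (u * x) (v * y) := by
  rw [CoxAux.bruhatLE_iff_ble] at h1 h2 ⊢
  exact CoxAux.main_ble cs (cs.length x) x le_rfl u v y h1 h2 h3
end
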